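/- arXiv:0809.3590 — 5 statements merged into one kernel-verified Lean document; each statement's English description precedes it below -/
import Mathlib

section
/- For every one-dimensional complex representation ρ : W → ℂ^× of W, there exists a continuous map F : X → ℂ^× such that F(w·x)·ρ(w) = F(x) for all w ∈ W and x ∈ X. (Equivalently, the quotient of the trivial line bundle X × ℂ → X by the W-action g·(x,u) = (g·x, ρ(g)u) is a topologically trivial line bundle over X/W.) -/
open Matrix

/-- A pseudo-reflection: a nonidentity element of `GL_n(ℂ)` whose fixed-point space
`ker(g - 1)` is a hyperplane (has codimension 1). -/
def IsPseudoReflection {n : ℕ} (g : GL (Fin n) ℂ) : Prop :=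
  g ≠ 1 ∧ Module.finrank ℂ
    (LinearMap.ker ((g : Matrix (Fin n) (Fin n) ℂ).mulVecLin - LinearMap.id)) = n - 1

/-- `W` is generated by its pseudo-reflections. -/
def IsGeneratedByPseudoReflections {n : ℕ} (W : Subgroup (GL (Fin n) ℂ)) : Prop :=
  Subgroup.closure {g : GL (Fin n) ℂ | g ∈ W ∧ IsPseudoReflection g} = W

/-- `W` acts irreducibly on `ℂ^n`. -/
def ActsIrreducibly {n : ℕ} (W : Subgroup (GL (Fin n) ℂ)) : Prop :=
  ∀ p : Submodule ℂ (Fin n → ℂ),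
    (∀ g ∈ W, ∀ v ∈ p, (g : Matrix (Fin n) (Fin n) ℂ).mulVec v ∈ p) → p = ⊥ ∨ p = ⊤

/-- The complement `X = V ∖ ⋃𝒜` of the union of the reflecting hyperplanes of `W`. -/
def hypComplement {n : ℕ} (W : Subgroup (GL (Fin n) ℂ)) : Set (Fin n → ℂ) :=
  {x | ∀ g ∈ W, IsPseudoReflection g → (g : Matrix (Fin n) (Fin n) ℂ).mulVec x ≠ x}

namespace KZAux

noncomputable section

open scoped Classical

open LinearMap Submodule

variable {n : ℕ}

/-- The linear map attached to an element of `GL_n(ℂ)`. -/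
def L (g : GL (Fin n) ℂ) : (Fin n → ℂ) →ₗ[ℂ] (Fin n → ℂ) :=
  (g : Matrix (Fin n) (Fin n) ℂ).mulVecLin

lemma L_apply (g : GL (Fin n) ℂ) (x : Fin n → ℂ) :
    L g x = (g : Matrix (Fin n) (Fin n) ℂ).mulVec x := rfl

lemma L_mul (g h : GL (Fin n) ℂ) : L (g * h) = (L g).comp (L h) := by
  simp only [L, Units.val_mul, Matrix.mulVecLin_mul]

lemma L_one : L (1 : GL (Fin n) ℂ) = LinearMap.id := by
  simp only [L, Units.val_one, Matrix.mulVecLin_one]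

lemma L_mul_apply (g h : GL (Fin n) ℂ) (x : Fin n → ℂ) :
    L (g * h) x = L g (L h x) := by rw [L_mul]; rfl

lemma L_inv_cancel (g : GL (Fin n) ℂ) (x : Fin n → ℂ) : L g (L g⁻¹ x) = x := by
  rw [← L_mul_apply, mul_inv_cancel, L_one]; rfl

lemma L_inv_cancel' (g : GL (Fin n) ℂ) (x : Fin n → ℂ) : L g⁻¹ (L g x) = x := by
  rw [← L_mul_apply, inv_mul_cancel, L_one]; rfl

lemma L_injective (g : GL (Fin n) ℂ) : Function.Injective (L g) := by
  intro a b h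
  have := congrArg (L g⁻¹) h
  rwa [L_inv_cancel', L_inv_cancel'] at this

/-- The linear equivalence attached to an element of `GL_n(ℂ)`. -/
def eL (g : GL (Fin n) ℂ) : (Fin n → ℂ) ≃ₗ[ℂ] (Fin n → ℂ) :=
  LinearEquiv.ofLinear (L g) (L g⁻¹)
    (by rw [← L_mul, mul_inv_cancel, L_one]) (by rw [← L_mul, inv_mul_cancel, L_one])

lemma finrank_comap_L (g : GL (Fin n) ℂ) (K : Submodule ℂ (Fin n → ℂ)) :
    Module.finrank ℂ (K.comap (L g)) = Module.finrank ℂ K := by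
  have h1 : K.comap (L g) = K.comap (eL g : (Fin n → ℂ) →ₗ[ℂ] (Fin n → ℂ)) := rfl
  rw [h1, Submodule.comap_equiv_eq_map_symm]
  exact LinearEquiv.finrank_map_eq _ _

lemma comap_L_comap_L_inv (g : GL (Fin n) ℂ) (K : Submodule ℂ (Fin n → ℂ)) :
    (K.comap (L g)).comap (L g⁻¹) = K := by
  rw [← Submodule.comap_comp, ← L_mul, mul_inv_cancel, L_one, Submodule.comap_id]

/-- `g` fixes `H` pointwise. -/
def Fixes (g : GL (Fin n) ℂ) (H : Submodule ℂ (Fin n → ℂ)) : Prop :=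
  ∀ y ∈ H, L g y = y

lemma Fixes.inv {g : GL (Fin n) ℂ} {H : Submodule ℂ (Fin n → ℂ)} (h : Fixes g H) :
    Fixes g⁻¹ H := by
  intro y hy
  conv_lhs => rw [← h y hy]
  rw [L_inv_cancel']

lemma Fixes.comap_eq {g : GL (Fin n) ℂ} {H : Submodule ℂ (Fin n → ℂ)} (h : Fixes g H) :
    H.comap (L g) = H := by
  ext x
  simp only [Submodule.mem_comap]
  constructor
  · intro hx
    have h2 : L g (L g x) = L g x := h _ hx
    have h3 : L g x = x := L_injective g h2
    rwa [← h3]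
  · intro hx
    rwa [h x hx]

lemma smul_cancel {φ : (Fin n → ℂ) →ₗ[ℂ] ℂ} (hφ : φ ≠ 0) {c c' : ℂ}
    (h : c • φ = c' • φ) : c = c' := by
  by_contra hne
  apply hφ
  have h2 : (c - c') • φ = 0 := by rw [sub_smul, h, sub_self]
  rcases smul_eq_zero.mp h2 with h3 | h3
  · exact absurd (sub_eq_zero.mp h3) hne
  · exact h3

lemma exists_smul_eq (φ ψ : (Fin n → ℂ) →ₗ[ℂ] ℂ) (hker : ker φ = ker ψ)
    (hne : ker φ ≠ ⊤) : ∃ c : ℂ, c ≠ 0 ∧ ψ = c • φ := by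
  have hx : ∃ x, x ∉ ker φ := by
    by_contra h
    push_neg at h
    exact hne (eq_top_iff'.mpr h)
  obtain ⟨x, hx⟩ := hx
  have hφx : φ x ≠ 0 := hx
  have hψx : ψ x ≠ 0 := by
    intro h0
    exact hx (hker ▸ (LinearMap.mem_ker.mpr h0 : x ∈ ker ψ))
  refine ⟨ψ x / φ x, div_ne_zero hψx hφx, ?_⟩
  refine LinearMap.ext fun v => ?_
  have hv : v - (φ v / φ x) • x ∈ ker φ := by
    simp only [LinearMap.mem_ker, map_sub, _root_.map_smul, smul_eq_mul]
    field_simp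
    simp
  have hv2 : ψ (v - (φ v / φ x) • x) = 0 := by
    have : v - (φ v / φ x) • x ∈ ker ψ := hker ▸ hv
    exact this
  rw [map_sub, _root_.map_smul, sub_eq_zero, smul_eq_mul] at hv2
  rw [LinearMap.smul_apply, smul_eq_mul, hv2]
  field_simp


section

variable (W : Subgroup (GL (Fin n) ℂ)) (ρ : W →* ℂˣ)

/-- The set of reflecting hyperplanes of `W`. -/
def AA : Set (Submodule ℂ (Fin n → ℂ)) :=
  (fun g => LinearMap.ker (L g - LinearMap.id)) '' {g : GL (Fin n) ℂ | g ∈ W ∧ IsPseudoReflection g}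

variable {W}

lemma AA_finrank {H : Submodule ℂ (Fin n → ℂ)} (hH : H ∈ AA W) :
    Module.finrank ℂ H = n - 1 := by
  obtain ⟨g, hg, rfl⟩ := hH
  exact hg.2.2

lemma AA_ne_top (hn : 1 ≤ n) {H : Submodule ℂ (Fin n → ℂ)} (hH : H ∈ AA W) : H ≠ ⊤ := by
  intro h
  have h1 := AA_finrank hH
  rw [h, finrank_top] at h1
  have h2 : Module.finrank ℂ (Fin n → ℂ) = n := Module.finrank_fin_fun ℂ
  omega

lemma AA_finite (hfin : (W : Set (GL (Fin n) ℂ)).Finite) : (AA W).Finite :=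
  Set.Finite.image _ (hfin.subset (fun _ hg => hg.1))

lemma comap_mem_AA {H : Submodule ℂ (Fin n → ℂ)} (hH : H ∈ AA W) (w : W) :
    H.comap (L (w : GL (Fin n) ℂ)) ∈ AA W := by
  obtain ⟨g, hg, rfl⟩ := hH
  set a : GL (Fin n) ℂ := (w : GL (Fin n) ℂ) with ha
  have hker : LinearMap.ker (L (a⁻¹ * g * a) - LinearMap.id)
      = (LinearMap.ker (L g - LinearMap.id)).comap (L a) := by
    ext x
    simp only [LinearMap.mem_ker, Submodule.mem_comap, LinearMap.sub_apply,
      LinearMap.id_apply, sub_eq_zero]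
    constructor
    · intro hx
      have h2 : L a (L (a⁻¹ * g * a) x) = L g (L a x) := by
        rw [← L_mul_apply, show a * (a⁻¹ * g * a) = g * a by group, L_mul_apply]
      rw [← h2, hx]
    · intro hx
      have h2 : L (a⁻¹ * g * a) x = L a⁻¹ (L g (L a x)) := by
        rw [show a⁻¹ * g * a = a⁻¹ * (g * a) by group, L_mul_apply, L_mul_apply]
      rw [h2, hx, L_inv_cancel']
  refine ⟨a⁻¹ * g * a, ⟨mul_mem (mul_mem (inv_mem w.2) hg.1) w.2, ?_, ?_⟩, hker⟩
  · intro h1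
    apply hg.2.1
    have : g = a * 1 * a⁻¹ := by rw [← h1]; group
    simpa using this
  · show Module.finrank ℂ (LinearMap.ker (L (a⁻¹ * g * a) - LinearMap.id)) = n - 1
    have h3 : Module.finrank ℂ (LinearMap.ker (L (a⁻¹ * g * a) - LinearMap.id)) =
        Module.finrank ℂ ((LinearMap.ker (L g - LinearMap.id)).comap (L a)) :=
      congrArg (fun p : Submodule ℂ (Fin n → ℂ) => Module.finrank ℂ p) hker
    refine h3.trans ?_
    rw [finrank_comap_L]
    exact hg.2.2

/-- A linear functional cutting out a given hyperplane. -/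
def alph (H : Submodule ℂ (Fin n → ℂ)) : (Fin n → ℂ) →ₗ[ℂ] ℂ :=
  if h : ∃ φ : (Fin n → ℂ) →ₗ[ℂ] ℂ, LinearMap.ker φ = H then h.choose else 0

lemma exists_functional (hn : 1 ≤ n) {H : Submodule ℂ (Fin n → ℂ)} (hH : H ∈ AA W) :
    ∃ φ : (Fin n → ℂ) →ₗ[ℂ] ℂ, LinearMap.ker φ = H := by
  have hfr : Module.finrank ℂ H = n - 1 := AA_finrank hH
  have hn' : Module.finrank ℂ (Fin n → ℂ) = n := Module.finrank_fin_fun ℂ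
  have hq : Module.finrank ℂ ((Fin n → ℂ) ⧸ H) = 1 := by
    have := Submodule.finrank_quotient_add_finrank H
    omega
  have e : ((Fin n → ℂ) ⧸ H) ≃ₗ[ℂ] ℂ :=
    LinearEquiv.ofFinrankEq _ _ (by rw [hq, Module.finrank_self])
  refine ⟨(e : ((Fin n → ℂ) ⧸ H) →ₗ[ℂ] ℂ).comp H.mkQ, ?_⟩
  rw [LinearMap.ker_comp, LinearEquiv.ker, Submodule.comap_bot, Submodule.ker_mkQ]

lemma alph_ker (hn : 1 ≤ n) {H : Submodule ℂ (Fin n → ℂ)} (hH : H ∈ AA W) :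
    LinearMap.ker (alph H) = H := by
  have h := exists_functional hn hH
  rw [alph, dif_pos h]
  exact h.choose_spec

lemma alph_ne (hn : 1 ≤ n) {H : Submodule ℂ (Fin n → ℂ)} (hH : H ∈ AA W) :
    alph H ≠ 0 := by
  intro h0
  apply AA_ne_top hn hH
  rw [← alph_ker hn hH, h0, LinearMap.ker_zero]

/-- The scalar by which `g` scales the functional of the hyperplane `H` it stabilizes. -/
def thetaC (H : Submodule ℂ (Fin n → ℂ)) (g : GL (Fin n) ℂ) : ℂ :=
  if h : ∃ c : ℂ, (alph H).comp (L g) = c • alph H then h.choose else 1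

lemma thetaC_spec (hn : 1 ≤ n) {H : Submodule ℂ (Fin n → ℂ)} (hH : H ∈ AA W)
    {g : GL (Fin n) ℂ} (hg : Fixes g H) :
    (alph H).comp (L g) = thetaC H g • alph H ∧ thetaC H g ≠ 0 := by
  have hker : LinearMap.ker ((alph H).comp (L g)) = LinearMap.ker (alph H) := by
    rw [LinearMap.ker_comp, alph_ker hn hH, hg.comap_eq]
  have hne : LinearMap.ker (alph H) ≠ ⊤ := by
    rw [alph_ker hn hH]; exact AA_ne_top hn hH
  obtain ⟨c, hc0, hc⟩ := exists_smul_eq (alph H) ((alph H).comp (L g)) hker.symm hne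
  have hex : ∃ d : ℂ, (alph H).comp (L g) = d • alph H := ⟨c, hc⟩
  have hspec : (alph H).comp (L g) = thetaC H g • alph H := by
    rw [thetaC, dif_pos hex]; exact hex.choose_spec
  refine ⟨hspec, ?_⟩
  have : thetaC H g = c := smul_cancel (alph_ne hn hH) (hspec.symm.trans hc)
  rw [this]; exact hc0

lemma thetaC_unique (hn : 1 ≤ n) {H : Submodule ℂ (Fin n → ℂ)} (hH : H ∈ AA W)
    {g : GL (Fin n) ℂ} (hg : Fixes g H) {c : ℂ}
    (h : (alph H).comp (L g) = c • alph H) : c = thetaC H g :=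
  smul_cancel (alph_ne hn hH) (h.symm.trans (thetaC_spec hn hH hg).1)


section

variable {W : Subgroup (GL (Fin n) ℂ)}

/-- The local condition identifying the exponent attached to a hyperplane:
on the pointwise stabilizer of `H`, `ρ⁻¹` agrees with the `a`-th power of the
canonical character `thetaC H`. -/
def PP (W : Subgroup (GL (Fin n) ℂ)) (ρ : W →* ℂˣ) (H : Submodule ℂ (Fin n → ℂ))
    (a : ℕ) : Prop :=
  ∀ u : W, Fixes (u : GL (Fin n) ℂ) H → ((ρ u : ℂˣ) : ℂ)⁻¹ = thetaC H (u : GL (Fin n) ℂ) ^ a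

/-- The exponent attached to a hyperplane. -/
def aa (W : Subgroup (GL (Fin n) ℂ)) (ρ : W →* ℂˣ) (H : Submodule ℂ (Fin n → ℂ)) : ℕ :=
  if h : ∃ a, PP W ρ H a then Nat.find h else 0

set_option maxHeartbeats 1000000 in
set_option synthInstance.maxHeartbeats 400000 in
lemma exists_PP (hn : 1 ≤ n) (hfin : (W : Set (GL (Fin n) ℂ)).Finite) (ρ : W →* ℂˣ)
    {H : Submodule ℂ (Fin n → ℂ)} (hH : H ∈ AA W) : ∃ a, PP W ρ H a := by
  haveI : Finite W := hfin.to_subtype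
  set S : Subgroup W :=
    { carrier := {u : W | Fixes (u : GL (Fin n) ℂ) H}
      one_mem' := by
        intro y hy
        show L ((1 : W) : GL (Fin n) ℂ) y = y
        rw [OneMemClass.coe_one, L_one]; rfl
      mul_mem' := by
        intro u v hu hv y hy
        show L ((u * v : W) : GL (Fin n) ℂ) y = y
        rw [show ((u * v : W) : GL (Fin n) ℂ)
            = ((u : GL (Fin n) ℂ)) * ((v : GL (Fin n) ℂ)) from rfl, L_mul_apply,
          hv y hy, hu y hy]
      inv_mem' := by
        intro u hu
        exact Fixes.inv hu } with hS
  have hmemS : ∀ u : W, u ∈ S ↔ Fixes (u : GL (Fin n) ℂ) H := fun u => Iff.rfl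
  have θval : ∀ u : S, (alph H).comp (L (((u : W)) : GL (Fin n) ℂ))
      = thetaC H (((u : W)) : GL (Fin n) ℂ) • alph H
      ∧ thetaC H (((u : W)) : GL (Fin n) ℂ) ≠ 0 :=
    fun u => thetaC_spec hn hH u.2
  set θ : S →* ℂˣ :=
    { toFun := fun u => Units.mk0 _ (θval u).2
      map_one' := by
        apply Units.ext
        show thetaC H (((1 : W)) : GL (Fin n) ℂ) = 1
        refine (thetaC_unique hn hH ?_ ?_).symm
        · intro y hy; rw [OneMemClass.coe_one, L_one]; rfl
        · rw [OneMemClass.coe_one, L_one, one_smul]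
          exact LinearMap.comp_id _
      map_mul' := by
        intro u v
        apply Units.ext
        show thetaC H ((((u * v : S) : W)) : GL (Fin n) ℂ) = _ * _
        refine (thetaC_unique hn hH (u * v).2 ?_).symm
        have hco : ((((u * v : S) : W)) : GL (Fin n) ℂ)
            = (((u : W)) : GL (Fin n) ℂ) * (((v : W)) : GL (Fin n) ℂ) := rfl
        simp only [Units.val_mk0]
        rw [hco, L_mul, ← LinearMap.comp_assoc, (θval u).1, LinearMap.smul_comp,
          (θval v).1, smul_smul] } with hθ
  have θinj : Function.Injective θ := by
    refine (injective_iff_map_eq_one θ).mpr ?_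
    intro u hu1
    have hth : thetaC H (((u : W)) : GL (Fin n) ℂ) = 1 := congrArg Units.val hu1
    set g : GL (Fin n) ℂ := ((u : W) : GL (Fin n) ℂ) with hg
    have hcomp : (alph H).comp (L g) = alph H := by
      rw [(θval u).1]
      rw [← hg, hth, one_smul]
    set η : (Fin n → ℂ) →ₗ[ℂ] (Fin n → ℂ) := L g - LinearMap.id with hη
    have hηH : ∀ x, η x ∈ H := by
      intro x
      rw [← alph_ker hn hH]
      have h1 : alph H (L g x) = alph H x := congrArg (fun ψ : (Fin n → ℂ) →ₗ[ℂ] ℂ => ψ x) hcomp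
      simp only [hη, LinearMap.mem_ker, LinearMap.sub_apply, LinearMap.id_apply, map_sub, h1,
        sub_self]
    have hη0 : ∀ y ∈ H, η y = 0 := by
      intro y hy
      simp only [hη, LinearMap.sub_apply, LinearMap.id_apply, u.2 y hy, sub_self]
      exact sub_eq_zero.mpr (u.2 y hy)
    have key : ∀ m : ℕ, L (g ^ m) = LinearMap.id + (m : ℂ) • η := by
      intro m
      induction m with
      | zero => simp [pow_zero, L_one]
      | succ m ih =>
        refine LinearMap.ext fun x => ?_
        have h1 : L (g ^ (m + 1)) x = L (g ^ m) (L g x) := by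
          rw [pow_succ, L_mul_apply]
        rw [h1, ih]
        have h2 : L g x = x + η x := by
          simp [hη]
        simp only [LinearMap.add_apply, LinearMap.smul_apply, LinearMap.id_apply, h2]
        have h3 : η (x + η x) = η x := by rw [map_add, hη0 _ (hηH x), add_zero]
        rw [h3]
        push_cast
        rw [add_smul, one_smul]
        abel
    have hord := pow_orderOf_eq_one u
    have hordpos := orderOf_pos u
    have hgm : g ^ orderOf u = 1 := by
      have h4 : ((u ^ orderOf u : S) : W) = (u : W) ^ orderOf u := rfl
      have h5 : (((u : W) ^ orderOf u : W) : GL (Fin n) ℂ) = g ^ orderOf u := rfl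
      rw [← h5, ← h4, hord]
      rfl
    have h1 : LinearMap.id + ((orderOf u : ℕ) : ℂ) • η = LinearMap.id := by
      rw [← key, hgm, L_one]
    have hη' : η = 0 := by
      have h2 : ((orderOf u : ℕ) : ℂ) • η = 0 := add_eq_left.mp h1
      rcases smul_eq_zero.mp h2 with h3 | h3
      · exact absurd h3 (Nat.cast_ne_zero.mpr hordpos.ne')
      · exact h3
    have hLg : L g = LinearMap.id := by
      have h4 : L g - LinearMap.id = 0 := by rw [← hη]; exact hη'
      rwa [sub_eq_zero] at h4
    have hgval : (g : Matrix (Fin n) (Fin n) ℂ) = (1 : Matrix (Fin n) (Fin n) ℂ) := by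
      apply Matrix.toLin'.injective
      rw [Matrix.toLin'_apply', Matrix.toLin'_apply', Matrix.mulVecLin_one]
      exact hLg
    have hgu : (u : W) = 1 := Subtype.ext (Units.ext hgval)
    exact Subtype.ext hgu
  haveI : IsCyclic S := isCyclic_of_subgroup_isDomain (R := ℂ) ((Units.coeHom ℂ).comp θ)
    (fun a b hab => θinj (Units.ext hab))
  obtain ⟨gen, hgen⟩ := IsCyclic.exists_generator (α := S)
  set e := orderOf gen with he
  have hepos : 0 < e := orderOf_pos gen
  haveI : NeZero e := ⟨hepos.ne'⟩
  have hordθ : orderOf (θ gen) = e := orderOf_injective θ θinj gen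
  set ζ : ℂ := ((θ gen : ℂˣ) : ℂ) with hζ
  have hordζ : orderOf ζ = e := by rw [hζ, orderOf_units, hordθ]
  have hprim : IsPrimitiveRoot ζ e := hordζ ▸ IsPrimitiveRoot.orderOf ζ
  set ξ : ℂ := (((ρ (gen : W)) : ℂˣ) : ℂ)⁻¹ with hξdef
  have hξe : ξ ^ e = 1 := by
    rw [hξdef, inv_pow]
    have h2 : ((gen : W) : W) ^ e = 1 := by
      have h4 : ((gen ^ e : S) : W) = ((gen : W) : W) ^ e := rfl
      rw [← h4, he, pow_orderOf_eq_one]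
      rfl
    rw [← Units.val_pow_eq_pow_val, ← map_pow, h2, _root_.map_one, Units.val_one, inv_one]
  obtain ⟨i, hie, hi⟩ := hprim.eq_pow_of_pow_eq_one hξe
  refine ⟨i, ?_⟩
  intro u hu
  set us : S := ⟨u, hu⟩ with hus
  have h3 : us ∈ Submonoid.powers gen := by
    have h4 : IsOfFinOrder gen := orderOf_pos_iff.mp hepos
    exact h4.mem_powers_iff_mem_zpowers.mpr (hgen us)
  obtain ⟨k, hk0⟩ := h3
  have hk : gen ^ k = us := hk0
  have huk : u = (gen : W) ^ k := by
    have h5 : ((gen ^ k : S) : W) = ((gen : W) : W) ^ k := rfl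
    rw [← h5, hk]
  have hρu : ((ρ u : ℂˣ) : ℂ)⁻¹ = ξ ^ k := by
    rw [huk, map_pow, Units.val_pow_eq_pow_val, ← inv_pow, hξdef]
  have hθu : thetaC H (u : GL (Fin n) ℂ) = ζ ^ k := by
    have h5 : θ us = θ gen ^ k := by rw [← hk, map_pow]
    have h6 : ((θ us : ℂˣ) : ℂ) = thetaC H ((us : W) : GL (Fin n) ℂ) := rfl
    have h7 : ((us : W) : GL (Fin n) ℂ) = (u : GL (Fin n) ℂ) := rfl
    rw [← h7, ← h6, h5, Units.val_pow_eq_pow_val, hζ]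
  rw [hρu, hθu, ← hi, ← pow_mul, ← pow_mul, mul_comm]

end

section

variable {W : Subgroup (GL (Fin n) ℂ)} (ρ : W →* ℂˣ)

lemma PP_comap (hn : 1 ≤ n) {H : Submodule ℂ (Fin n → ℂ)} (hH : H ∈ AA W) (w : W) {a : ℕ}
    (h : PP W ρ H a) : PP W ρ (H.comap (L (w : GL (Fin n) ℂ))) a := by
  intro u hu
  set aw : GL (Fin n) ℂ := (w : GL (Fin n) ℂ) with haw
  set H' := H.comap (L aw) with hH'def
  have hH' : H' ∈ AA W := comap_mem_AA hH w
  set u' : W := w * u * w⁻¹ with hu'def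
  have hu'c : (u' : GL (Fin n) ℂ) = aw * (u : GL (Fin n) ℂ) * aw⁻¹ := rfl
  have hu' : Fixes (u' : GL (Fin n) ℂ) H := by
    intro y hy
    have h1 : L aw⁻¹ y ∈ H' := by
      show L aw (L aw⁻¹ y) ∈ H
      rw [L_inv_cancel]; exact hy
    have h2 : L (u' : GL (Fin n) ℂ) y = L aw (L (u : GL (Fin n) ℂ) (L aw⁻¹ y)) := by
      rw [hu'c, ← L_mul_apply, ← L_mul_apply]
    rw [h2, hu _ h1, L_inv_cancel]
  have hρ : ρ u' = ρ u := by
    rw [hu'def, _root_.map_mul, _root_.map_mul, map_inv]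
    exact mul_inv_cancel_comm _ _
  have hth : thetaC H' (u : GL (Fin n) ℂ) = thetaC H (u' : GL (Fin n) ℂ) := by
    set β := (alph H).comp (L aw) with hβ
    have hkerβ : LinearMap.ker β = H' := by
      rw [hβ, LinearMap.ker_comp, alph_ker hn hH]
    have hwk : LinearMap.ker (alph H') = LinearMap.ker β := by
      rw [hkerβ, alph_ker hn hH']
    have hne : LinearMap.ker (alph H') ≠ ⊤ := by
      rw [alph_ker hn hH']; exact AA_ne_top hn hH'
    obtain ⟨d, hd0, hd⟩ := exists_smul_eq (alph H') β hwk hne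
    have h1 := (thetaC_spec hn hH' hu).1
    have h2 : β.comp (L (u : GL (Fin n) ℂ)) = thetaC H' (u : GL (Fin n) ℂ) • β := by
      rw [hd, LinearMap.smul_comp, h1, smul_smul, mul_comm d _, ← smul_smul, ← hd]
    have h3 : β.comp (L (u : GL (Fin n) ℂ)) = thetaC H (u' : GL (Fin n) ℂ) • β := by
      have h4 : β.comp (L (u : GL (Fin n) ℂ))
          = ((alph H).comp (L (u' : GL (Fin n) ℂ))).comp (L aw) := by
        refine LinearMap.ext fun x => ?_
        show alph H (L aw (L (u : GL (Fin n) ℂ) x)) = alph H (L (u' : GL (Fin n) ℂ) (L aw x))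
        rw [← L_mul_apply, ← L_mul_apply, show aw * (u : GL (Fin n) ℂ) = (u' : GL (Fin n) ℂ) * aw
          by rw [hu'c]; group]
      rw [h4, (thetaC_spec hn hH hu').1, LinearMap.smul_comp, ← hβ]
    have hβne : β ≠ 0 := by
      intro h0
      apply AA_ne_top hn hH'
      rw [← hkerβ, h0, LinearMap.ker_zero]
    exact smul_cancel hβne (h2.symm.trans h3)
  rw [hth, ← h u' hu', hρ]

lemma PP_aa (hn : 1 ≤ n) (hfin : (W : Set (GL (Fin n) ℂ)).Finite)
    {H : Submodule ℂ (Fin n → ℂ)} (hH : H ∈ AA W) : PP W ρ H (aa W ρ H) := by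
  have h := exists_PP hn hfin ρ hH
  rw [aa, dif_pos h]
  exact Nat.find_spec h

lemma aa_comap (hn : 1 ≤ n) (hfin : (W : Set (GL (Fin n) ℂ)).Finite)
    {H : Submodule ℂ (Fin n → ℂ)} (hH : H ∈ AA W) (w : W) :
    aa W ρ (H.comap (L (w : GL (Fin n) ℂ))) = aa W ρ H := by
  have hH' := comap_mem_AA hH w
  have h := exists_PP hn hfin ρ hH
  have h' := exists_PP hn hfin ρ hH'
  have hcc : (H.comap (L (w : GL (Fin n) ℂ))).comap (L ((w⁻¹ : W) : GL (Fin n) ℂ)) = H := by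
    have h0 : ((w⁻¹ : W) : GL (Fin n) ℂ) = ((w : GL (Fin n) ℂ))⁻¹ := rfl
    rw [h0, comap_L_comap_L_inv]
  rw [aa, aa, dif_pos h, dif_pos h']
  apply le_antisymm
  · exact Nat.find_min' h' (PP_comap ρ hn hH w (Nat.find_spec h))
  · refine Nat.find_min' h ?_
    have h5 := PP_comap ρ hn hH' w⁻¹ (Nat.find_spec h')
    rwa [hcc] at h5

end

section

variable {W : Subgroup (GL (Fin n) ℂ)}

/-- The master semi-invariant function: the product of the linear forms of the reflecting
hyperplanes raised to the exponents attached to `ρ`. -/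
def Ff (W : Subgroup (GL (Fin n) ℂ)) (ρ : W →* ℂˣ)
    (hfin : (W : Set (GL (Fin n) ℂ)).Finite) : (Fin n → ℂ) → ℂ :=
  fun x => ∏ H ∈ (AA_finite hfin).toFinset, (alph H x) ^ (aa W ρ H)

lemma Ff_apply (ρ : W →* ℂˣ) (hfin : (W : Set (GL (Fin n) ℂ)).Finite) (x : Fin n → ℂ) :
    Ff W ρ hfin x = ∏ H ∈ (AA_finite hfin).toFinset, (alph H x) ^ (aa W ρ H) := rfl

set_option maxHeartbeats 1000000 in
lemma Ff_reflection (hn : 1 ≤ n) (hfin : (W : Set (GL (Fin n) ℂ)).Finite) (ρ : W →* ℂˣ)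
    (s : W) (hs : IsPseudoReflection (s : GL (Fin n) ℂ)) (x : Fin n → ℂ) :
    Ff W ρ hfin (L (s : GL (Fin n) ℂ) x) * ((ρ s : ℂˣ) : ℂ) = Ff W ρ hfin x := by
  classical
  set A := (AA_finite hfin).toFinset with hA
  set gs : GL (Fin n) ℂ := (s : GL (Fin n) ℂ) with hgs
  set H : Submodule ℂ (Fin n → ℂ) := LinearMap.ker (L gs - LinearMap.id) with hHdef
  have hH : H ∈ AA W := ⟨gs, ⟨s.2, hs⟩, rfl⟩
  have hmemA : ∀ K, K ∈ A ↔ K ∈ AA W := fun K => Set.Finite.mem_toFinset _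
  have hHA : H ∈ A := (hmemA H).mpr hH
  have hfix : Fixes gs H := by
    intro y hy
    have h0 := LinearMap.mem_ker.mp hy
    rwa [LinearMap.sub_apply, LinearMap.id_apply, sub_eq_zero] at h0
  set σ : Submodule ℂ (Fin n → ℂ) → Submodule ℂ (Fin n → ℂ) := fun K => K.comap (L gs) with hσ
  set τ : Submodule ℂ (Fin n → ℂ) → Submodule ℂ (Fin n → ℂ) := fun K => K.comap (L gs⁻¹) with hτ
  have hτσ : ∀ K, τ (σ K) = K := fun K => comap_L_comap_L_inv gs K
  have hστ : ∀ K, σ (τ K) = K := fun K => by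
    have h0 := comap_L_comap_L_inv gs⁻¹ K
    rwa [inv_inv] at h0
  have hσA : ∀ K ∈ A, σ K ∈ A := by
    intro K hK
    rw [hmemA] at hK ⊢
    exact comap_mem_AA hK s
  have hτA : ∀ K ∈ A, τ K ∈ A := by
    intro K hK
    rw [hmemA] at hK ⊢
    exact comap_mem_AA hK s⁻¹
  have hσH : σ H = H := hfix.comap_eq
  have hτH : τ H = H := (hfix.inv).comap_eq
  have hc : ∀ K, ∃ c : ℂ, K ∈ A → (c ≠ 0 ∧ (alph K).comp (L gs) = c • alph (σ K)) := by
    intro K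
    by_cases hK : K ∈ A
    · have hKA : K ∈ AA W := (hmemA K).mp hK
      have hσKA : σ K ∈ AA W := (hmemA _).mp (hσA K hK)
      have hker : LinearMap.ker (alph (σ K)) = LinearMap.ker ((alph K).comp (L gs)) := by
        rw [LinearMap.ker_comp, alph_ker hn hKA, alph_ker hn hσKA]
      have hne : LinearMap.ker (alph (σ K)) ≠ ⊤ := by
        rw [alph_ker hn hσKA]; exact AA_ne_top hn hσKA
      obtain ⟨c, hc0, hceq⟩ := exists_smul_eq (alph (σ K)) ((alph K).comp (L gs)) hker hne
      exact ⟨c, fun _ => ⟨hc0, hceq⟩⟩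
    · exact ⟨1, fun h0 => absurd h0 hK⟩
  choose c hcspec using hc
  have step1 : Ff W ρ hfin (L gs x) = (∏ K ∈ A, c K ^ aa W ρ K) * Ff W ρ hfin x := by
    have h1 : ∀ K ∈ A, (alph K (L gs x)) ^ (aa W ρ K)
        = c K ^ aa W ρ K * (alph (σ K) x) ^ (aa W ρ (σ K)) := by
      intro K hK
      have h2 : alph K (L gs x) = c K * alph (σ K) x := by
        have h3 := congrArg (fun ψ : (Fin n → ℂ) →ₗ[ℂ] ℂ => ψ x) (hcspec K hK).2
        simpa using h3
      have h4 : aa W ρ (σ K) = aa W ρ K := aa_comap ρ hn hfin ((hmemA K).mp hK) s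
      rw [h2, mul_pow, h4]
    rw [Ff_apply, Ff_apply, ← hA, Finset.prod_congr rfl h1, Finset.prod_mul_distrib]
    congr 1
    exact Finset.prod_nbij' σ τ hσA hτA (fun K _ => hτσ K) (fun K _ => hστ K)
      (fun K _ => rfl)
  have hPP := PP_aa ρ hn hfin hH
  have hρs : ((ρ s : ℂˣ) : ℂ)⁻¹ = thetaC H gs ^ aa W ρ H := hPP s hfix
  have hcH : c H = thetaC H gs := by
    have h5 := (hcspec H hHA).2
    rw [hσH] at h5
    exact thetaC_unique hn hH hfix h5
  obtain ⟨h₀, hh₀H, hh₀⟩ : ∃ y, y ∈ H ∧ ∀ K ∈ A.erase H, y ∉ K := by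
    set T : Finset (Subspace ℂ H) := (A.erase H).image
      (fun K => K.comap H.subtype) with hT
    have htop : ⊤ ∉ T := by
      intro htop
      obtain ⟨K, hK, hKt⟩ := Finset.mem_image.mp htop
      have hKA : K ∈ AA W := (hmemA K).mp (Finset.mem_of_mem_erase hK)
      have hHK : H ≤ K := by
        intro y hy
        have h6 : (⟨y, hy⟩ : H) ∈ K.comap H.subtype := by rw [hKt]; trivial
        exact h6
      have h7 : Module.finrank ℂ K ≤ Module.finrank ℂ H := by
        rw [AA_finrank hKA, AA_finrank hH]
      have h8 : H = K := Submodule.eq_of_le_of_finrank_le hHK h7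
      exact (Finset.mem_erase.mp hK).1 h8.symm
    have hneuniv := Subspace.biUnion_ne_univ_of_top_notMem (k := ℂ) (E := H) htop
    have hex : ∃ y : H, y ∉ ⋃ p ∈ T, (p : Set H) := by
      by_contra hy
      push_neg at hy
      exact hneuniv (Set.eq_univ_iff_forall.mpr hy)
    obtain ⟨y, hy⟩ := hex
    refine ⟨y.1, y.2, ?_⟩
    intro K hK hyK
    apply hy
    refine Set.mem_biUnion (Finset.mem_image_of_mem _ hK) ?_
    exact hyK
  have herase : ∏ K ∈ A.erase H, c K ^ aa W ρ K = 1 := by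
    set Q := ∏ K ∈ A.erase H, (alph K h₀) ^ aa W ρ K with hQ
    have hQne : Q ≠ 0 := by
      rw [hQ]
      apply Finset.prod_ne_zero_iff.mpr
      intro K hK
      apply pow_ne_zero
      intro h0
      have hKA : K ∈ AA W := (hmemA K).mp (Finset.mem_of_mem_erase hK)
      exact hh₀ K hK (by rw [← alph_ker hn hKA]; exact h0)
    have hσerase : ∀ K ∈ A.erase H, σ K ∈ A.erase H := by
      intro K hK
      rcases Finset.mem_erase.mp hK with ⟨hne, hKA⟩
      refine Finset.mem_erase.mpr ⟨?_, hσA K hKA⟩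
      intro h0
      apply hne
      rw [← hτσ K, h0, hτH]
    have hτerase : ∀ K ∈ A.erase H, τ K ∈ A.erase H := by
      intro K hK
      rcases Finset.mem_erase.mp hK with ⟨hne, hKA⟩
      refine Finset.mem_erase.mpr ⟨?_, hτA K hKA⟩
      intro h0
      apply hne
      rw [← hστ K, h0, hσH]
    have hmain : ∏ K ∈ A.erase H, (c K ^ aa W ρ K * (alph (σ K) h₀) ^ aa W ρ (σ K)) = Q := by
      have h6 : ∀ K ∈ A.erase H, c K ^ aa W ρ K * (alph (σ K) h₀) ^ aa W ρ (σ K)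
          = (alph K h₀) ^ aa W ρ K := by
        intro K hK
        have hKA : K ∈ A := Finset.mem_of_mem_erase hK
        have h7 : alph K (L gs h₀) = c K * alph (σ K) h₀ := by
          have h8 := congrArg (fun ψ : (Fin n → ℂ) →ₗ[ℂ] ℂ => ψ h₀) (hcspec K hKA).2
          simpa using h8
        have h9 : L gs h₀ = h₀ := hfix h₀ hh₀H
        have h4 : aa W ρ (σ K) = aa W ρ K := aa_comap ρ hn hfin ((hmemA K).mp hKA) s
        rw [h4, ← mul_pow, ← h7, h9]
      rw [Finset.prod_congr rfl h6]
    rw [Finset.prod_mul_distrib] at hmain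
    have h10 : ∏ K ∈ A.erase H, (alph (σ K) h₀) ^ aa W ρ (σ K) = Q := by
      rw [hQ]
      exact Finset.prod_nbij' σ τ hσerase hτerase (fun K _ => hτσ K) (fun K _ => hστ K)
        (fun K _ => rfl)
    rw [h10] at hmain
    exact mul_right_cancel₀ hQne (by rw [hmain, one_mul])
  have hconst : ∏ K ∈ A, c K ^ aa W ρ K = ((ρ s : ℂˣ) : ℂ)⁻¹ := by
    rw [← Finset.mul_prod_erase A _ hHA, herase, mul_one, hcH, hρs]
  rw [step1, hconst]
  have hρne : ((ρ s : ℂˣ) : ℂ) ≠ 0 := Units.ne_zero _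
  field_simp

end

end

end

end KZAux

/-- **Line bundles attached to one-dimensional representations of a reflection group are
topologically trivial.** For every one-dimensional representation `ρ : W → ℂ^×` there is
a continuous nonvanishing function `F` on the hyperplane complement `X` with
`F(w·x)·ρ(w) = F(x)`; equivalently the quotient of the trivial line bundle `X × ℂ → X`
by the `W`-action `g·(x,u) = (g·x, ρ(g)u)` is a topologically trivial line bundle
over `X/W`. -/
theorem one_dimensional_kz_bundle_trivial (n : ℕ) (hn : 1 ≤ n)
    (W : Subgroup (GL (Fin n) ℂ)) (hfin : (W : Set (GL (Fin n) ℂ)).Finite)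
    (hgen : IsGeneratedByPseudoReflections W) (hirr : ActsIrreducibly W)
    (ρ : W →* ℂˣ) :
    ∃ F : (Fin n → ℂ) → ℂ,
      ContinuousOn F (hypComplement W) ∧
      (∀ x ∈ hypComplement W, F x ≠ 0) ∧
      (∀ (w : W), ∀ x ∈ hypComplement W,
        F (((w : GL (Fin n) ℂ) : Matrix (Fin n) (Fin n) ℂ).mulVec x) * (ρ w : ℂ)
          = F x) := by
  classical
  refine ⟨KZAux.Ff W ρ hfin, ?_, ?_, ?_⟩
  · -- continuity
    apply Continuous.continuousOn
    apply continuous_finset_prod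
    intro H _
    exact ((KZAux.alph H).continuous_of_finiteDimensional).pow _
  · -- nonvanishing on the hyperplane complement
    intro x hx
    rw [KZAux.Ff_apply]
    apply Finset.prod_ne_zero_iff.mpr
    intro K hK
    apply pow_ne_zero
    have hKA : K ∈ KZAux.AA W := (Set.Finite.mem_toFinset _).mp hK
    intro h0
    have hxK : x ∈ K := by rw [← KZAux.alph_ker hn hKA]; exact h0
    obtain ⟨g, hg, hker⟩ := hKA
    rw [← hker] at hxK
    have h1 := LinearMap.mem_ker.mp hxK
    rw [LinearMap.sub_apply, LinearMap.id_apply, sub_eq_zero] at h1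
    exact hx g hg.1 hg.2 h1
  · -- equivariance
    intro w x _
    have hgen' : Subgroup.closure {g : GL (Fin n) ℂ | g ∈ W ∧ IsPseudoReflection g} = W := hgen
    have main : ∀ g : GL (Fin n) ℂ,
        g ∈ Subgroup.closure {g : GL (Fin n) ℂ | g ∈ W ∧ IsPseudoReflection g} →
        ∃ hg : g ∈ W, ∀ y : Fin n → ℂ,
          KZAux.Ff W ρ hfin ((g : Matrix (Fin n) (Fin n) ℂ).mulVec y)
            * ((ρ ⟨g, hg⟩ : ℂˣ) : ℂ) = KZAux.Ff W ρ hfin y := by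
      intro g hgc
      refine Subgroup.closure_induction ?_ ?_ ?_ ?_ hgc
      · intro g hgS
        exact ⟨hgS.1, fun y => KZAux.Ff_reflection hn hfin ρ ⟨g, hgS.1⟩ hgS.2 y⟩
      · refine ⟨one_mem W, fun y => ?_⟩
        have h1 : (⟨(1 : GL (Fin n) ℂ), one_mem W⟩ : W) = 1 := rfl
        rw [h1, _root_.map_one]
        simp [Matrix.one_mulVec]
      · intro a b _ _ hpa hpb
        obtain ⟨haW, hEa⟩ := hpa
        obtain ⟨hbW, hEb⟩ := hpb
        refine ⟨mul_mem haW hbW, fun y => ?_⟩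
        have hco : ((a * b : GL (Fin n) ℂ) : Matrix (Fin n) (Fin n) ℂ).mulVec y
            = (a : Matrix (Fin n) (Fin n) ℂ).mulVec
              ((b : Matrix (Fin n) (Fin n) ℂ).mulVec y) := by
          rw [Units.val_mul, ← Matrix.mulVec_mulVec]
        have hcoρ : (⟨a * b, mul_mem haW hbW⟩ : W) = (⟨a, haW⟩ : W) * (⟨b, hbW⟩ : W) := rfl
        rw [hco, hcoρ, _root_.map_mul, Units.val_mul, ← mul_assoc]
        calc KZAux.Ff W ρ hfin ((a : Matrix (Fin n) (Fin n) ℂ).mulVec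
                ((b : Matrix (Fin n) (Fin n) ℂ).mulVec y))
              * ((ρ ⟨a, haW⟩ : ℂˣ) : ℂ) * ((ρ ⟨b, hbW⟩ : ℂˣ) : ℂ)
            = KZAux.Ff W ρ hfin ((b : Matrix (Fin n) (Fin n) ℂ).mulVec y)
              * ((ρ ⟨b, hbW⟩ : ℂˣ) : ℂ) := by
              rw [hEa ((b : Matrix (Fin n) (Fin n) ℂ).mulVec y)]
          _ = KZAux.Ff W ρ hfin y := hEb y
      · intro a _ hpa
        obtain ⟨haW, hEa⟩ := hpa
        refine ⟨inv_mem haW, fun y => ?_⟩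
        have h1 := hEa (((a⁻¹ : GL (Fin n) ℂ) : Matrix (Fin n) (Fin n) ℂ).mulVec y)
        have h2 : (a : Matrix (Fin n) (Fin n) ℂ).mulVec
            (((a⁻¹ : GL (Fin n) ℂ) : Matrix (Fin n) (Fin n) ℂ).mulVec y) = y := by
          rw [Matrix.mulVec_mulVec, ← Units.val_mul, mul_inv_cancel, Units.val_one,
            Matrix.one_mulVec]
        rw [h2] at h1
        have hcoρ : (⟨a⁻¹, inv_mem haW⟩ : W) = (⟨a, haW⟩ : W)⁻¹ := rfl
        rw [hcoρ, map_inv, ← h1, mul_assoc, Units.val_inv_eq_inv_val,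
          mul_inv_cancel₀ (Units.ne_zero _), mul_one]
    obtain ⟨hw, hE⟩ := main (w : GL (Fin n) ℂ) (by rw [hgen']; exact w.2)
    have h3 : (⟨(w : GL (Fin n) ℂ), hw⟩ : W) = w := Subtype.ext rfl
    rw [← h3]
    exact hE x
end

section
/- Let d, e ≥ 1 and r ≥ 4, and let W_r = G(de,e,r) with W_{r−1} = G(de,e,r−1) embedded as the subgroup fixing the last standard basis vector. If p : W_r → Q is a group homomorphism such that the image p(W_{r−1}) is a commutative subgroup of Q, then the image p(W_r) is commutative. -/
noncomputable section

open Matrix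

/-- The monomial matrix with nonzero entries `c j` at positions `(σ j, j)`. -/
def monoMat {r : ℕ} (σ : Equiv.Perm (Fin r)) (c : Fin r → ℂ) :
    Matrix (Fin r) (Fin r) ℂ :=
  Matrix.of fun i j => if i = σ j then c j else 0

lemma monoMat_mul {r : ℕ} (σ τ : Equiv.Perm (Fin r)) (c b : Fin r → ℂ) :
    monoMat σ c * monoMat τ b = monoMat (σ * τ) (fun j => c (τ j) * b j) := by
  ext i k
  simp only [monoMat, Matrix.mul_apply, Matrix.of_apply]
  rw [Finset.sum_eq_single (τ k)]
  · by_cases h : i = σ (τ k) <;> simp [h, Equiv.Perm.mul_apply]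
  · intro j _ hj; simp [hj]
  · intro h; exact absurd (Finset.mem_univ _) h

lemma monoMat_one {r : ℕ} : monoMat (1 : Equiv.Perm (Fin r)) 1 = 1 := by
  ext i j
  simp [monoMat, Matrix.one_apply]
  congr

/-- `A` is a monomial matrix whose nonzero entries are `d*e`-th roots of unity, the
product of the nonzero entries being a `d`-th root of unity. -/
def IsGMonomial (d e : ℕ) {r : ℕ} (A : Matrix (Fin r) (Fin r) ℂ) : Prop :=
  ∃ (σ : Equiv.Perm (Fin r)) (c : Fin r → ℂ),
    (∀ i, c i ^ (d * e) = 1) ∧ (∏ i, c i) ^ d = 1 ∧ A = monoMat σ c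

/-- The complex reflection group `G(de,e,r)`, as a subgroup of `GL_r(ℂ)`. -/
def Gdeer (d e r : ℕ) : Subgroup (GL (Fin r) ℂ) where
  carrier := {A | IsGMonomial d e (A : Matrix (Fin r) (Fin r) ℂ)}
  one_mem' := ⟨1, 1, by simp, by simp, by simp [monoMat_one]⟩
  mul_mem' := by
    rintro A B ⟨σ, c, hc, hcp, hA⟩ ⟨τ, b, hb, hbp, hB⟩
    refine ⟨σ * τ, fun j => c (τ j) * b j, fun i => by rw [mul_pow, hc, hb, mul_one], ?_, ?_⟩
    · rw [Finset.prod_mul_distrib, Equiv.prod_comp τ c, mul_pow, hcp, hbp, mul_one]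
    · rw [Units.val_mul, hA, hB, monoMat_mul]
  inv_mem' := by
    rintro A ⟨σ, c, hc, hcp, hA⟩
    have hcne : ∀ j, c j ≠ 0 := by
      intro j hj
      have h1 : ((A : Matrix (Fin r) (Fin r) ℂ) * ((A⁻¹ : GL (Fin r) ℂ) :
          Matrix (Fin r) (Fin r) ℂ)) (σ j) (σ j) = 1 := by
        rw [← Units.val_mul, mul_inv_cancel]
        simp [Matrix.one_apply]
      rw [hA, Matrix.mul_apply, Finset.sum_eq_single j] at h1
      · simp [monoMat, hj] at h1
      · intro k _ hk
        have hne : σ j ≠ σ k := fun h => hk (Equiv.injective σ h).symm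
        simp [monoMat, hne]
      · intro h; exact absurd (Finset.mem_univ _) h
    have hAB : (A : Matrix (Fin r) (Fin r) ℂ) *
        monoMat σ⁻¹ (fun j => (c (σ⁻¹ j))⁻¹) = 1 := by
      rw [hA, monoMat_mul]
      have hone : (fun j => c (σ⁻¹ j) * (c (σ⁻¹ j))⁻¹) = (1 : Fin r → ℂ) := by
        funext j; exact mul_inv_cancel₀ (hcne _)
      rw [mul_inv_cancel, hone, monoMat_one]
    refine ⟨σ⁻¹, fun j => (c (σ⁻¹ j))⁻¹, fun i => by rw [inv_pow, hc, inv_one], ?_, ?_⟩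
    · rw [Finset.prod_inv_distrib, Equiv.prod_comp σ⁻¹ c, inv_pow, hcp, inv_one]
    · calc ((A⁻¹ : GL (Fin r) ℂ) : Matrix (Fin r) (Fin r) ℂ)
          = ((A⁻¹ : GL (Fin r) ℂ) : Matrix (Fin r) (Fin r) ℂ) *
            ((A : Matrix (Fin r) (Fin r) ℂ) *
              monoMat σ⁻¹ (fun j => (c (σ⁻¹ j))⁻¹)) := by rw [hAB, mul_one]
        _ = (((A⁻¹ * A : GL (Fin r) ℂ)) : Matrix (Fin r) (Fin r) ℂ) *
              monoMat σ⁻¹ (fun j => (c (σ⁻¹ j))⁻¹) := by rw [Units.val_mul, mul_assoc]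
        _ = monoMat σ⁻¹ (fun j => (c (σ⁻¹ j))⁻¹) := by
              rw [inv_mul_cancel, Units.val_one, one_mul]

/-- `A` fixes the last `k` standard basis vectors of `ℂ^r`, i.e. its columns of index
`≥ r - k` agree with those of the identity matrix.  This characterizes the standard
embedding of `G(de,e,r-k)` inside `G(de,e,r)`. -/
def FixesLastVectors {r : ℕ} (k : ℕ) (A : GL (Fin r) ℂ) : Prop :=
  ∀ j : Fin r, r - k ≤ (j : ℕ) →
    ∀ i, (A : Matrix (Fin r) (Fin r) ℂ) i j = (1 : Matrix (Fin r) (Fin r) ℂ) i j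

/-! ### Auxiliary material -/

section Aux

variable {r : ℕ}

/-- A monomial matrix with nonvanishing coefficients, as a unit of the matrix ring. -/
def monoUnit (σ : Equiv.Perm (Fin r)) (c : Fin r → ℂ) (hc : ∀ j, c j ≠ 0) :
    GL (Fin r) ℂ where
  val := monoMat σ c
  inv := monoMat σ⁻¹ (fun j => (c (σ⁻¹ j))⁻¹)
  val_inv := by
    rw [monoMat_mul]
    have : (fun j => c (σ⁻¹ j) * (c (σ⁻¹ j))⁻¹) = (1 : Fin r → ℂ) := by
      funext j; exact mul_inv_cancel₀ (hc _)
    rw [mul_inv_cancel, this, monoMat_one]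
  inv_val := by
    rw [monoMat_mul]
    have : (fun j => (c (σ⁻¹ (σ j)))⁻¹ * c j) = (1 : Fin r → ℂ) := by
      funext j; simp [inv_mul_cancel₀ (hc j)]
    rw [inv_mul_cancel, this, monoMat_one]

@[simp] lemma monoUnit_val (σ : Equiv.Perm (Fin r)) (c : Fin r → ℂ) (hc : ∀ j, c j ≠ 0) :
    ((monoUnit σ c hc : GL (Fin r) ℂ) : Matrix (Fin r) (Fin r) ℂ) = monoMat σ c := rfl

lemma monoUnit_mem (d e : ℕ) (σ : Equiv.Perm (Fin r)) (c : Fin r → ℂ) (hc : ∀ j, c j ≠ 0)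
    (h1 : ∀ i, c i ^ (d * e) = 1) (h2 : (∏ i, c i) ^ d = 1) :
    monoUnit σ c hc ∈ Gdeer d e r :=
  ⟨σ, c, h1, h2, rfl⟩

lemma ne_zero_of_pow_eq_one {z : ℂ} {n : ℕ} (hn : n ≠ 0) (h : z ^ n = 1) : z ≠ 0 := by
  intro h0; rw [h0, zero_pow hn] at h; exact zero_ne_one h

/-- From the fact that column `m` of `monoMat σ c` is the `m`-th identity column,
deduce `σ m = m` and `c m = 1`. -/
lemma fix_spec (σ : Equiv.Perm (Fin r)) (c : Fin r → ℂ) (m : Fin r)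
    (h : ∀ i, monoMat σ c i m = (1 : Matrix (Fin r) (Fin r) ℂ) i m) :
    σ m = m ∧ c m = 1 := by
  have h1 := h m
  simp only [monoMat, Matrix.of_apply, Matrix.one_apply_eq] at h1
  by_cases hm : m = σ m
  · rw [if_pos hm] at h1; exact ⟨hm.symm, h1⟩
  · rw [if_neg hm] at h1; exact absurd h1 zero_ne_one

lemma perm_local {σ : Equiv.Perm (Fin r)} {i j : Fin r}
    (hσ : ∀ m, m ≠ i → m ≠ j → σ m = m) (m : Fin r) :
    σ m = i ∨ σ m = j ∨ σ m = m := by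
  by_contra hx
  push_neg at hx
  exact hx.2.2 (σ.injective (hσ (σ m) hx.1 hx.2.1))

/-- Two monomial matrices with disjoint (two-point) supports commute. -/
lemma monoMat_comm_of_disjoint {σ τ : Equiv.Perm (Fin r)} {c b : Fin r → ℂ}
    {i j k l : Fin r}
    (hσ : ∀ m, m ≠ i → m ≠ j → σ m = m) (hc : ∀ m, m ≠ i → m ≠ j → c m = 1)
    (hτ : ∀ m, m ≠ k → m ≠ l → τ m = m) (hb : ∀ m, m ≠ k → m ≠ l → b m = 1)
    (hik : i ≠ k) (hil : i ≠ l) (hjk : j ≠ k) (hjl : j ≠ l) :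
    monoMat σ c * monoMat τ b = monoMat τ b * monoMat σ c := by
  have hσin : ∀ m, m = i ∨ m = j → (σ m = i ∨ σ m = j) := by
    intro m hm
    rcases perm_local hσ m with h | h | h
    · exact Or.inl h
    · exact Or.inr h
    · rw [h]; exact hm
  have hτin : ∀ m, m = k ∨ m = l → (τ m = k ∨ τ m = l) := by
    intro m hm
    rcases perm_local hτ m with h | h | h
    · exact Or.inl h
    · exact Or.inr h
    · rw [h]; exact hm
  rw [monoMat_mul, monoMat_mul]
  have hperm : σ * τ = τ * σ := by
    ext m
    simp only [Equiv.Perm.mul_apply]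
    by_cases hmi : m = i ∨ m = j
    · have hmk : m ≠ k ∧ m ≠ l := by
        rcases hmi with h | h <;> subst h <;> exact ⟨by assumption, by assumption⟩
      rw [hτ m hmk.1 hmk.2]
      rcases hσin m hmi with h | h
      · rw [hτ (σ m) (h ▸ hik) (h ▸ hil)]
      · rw [hτ (σ m) (h ▸ hjk) (h ▸ hjl)]
    · push_neg at hmi
      rw [hσ m hmi.1 hmi.2]
      by_cases hmk : m = k ∨ m = l
      · rcases hτin m hmk with h | h
        · rw [hσ (τ m) (h.symm ▸ hik.symm) (h.symm ▸ hjk.symm)]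
        · rw [hσ (τ m) (h.symm ▸ hil.symm) (h.symm ▸ hjl.symm)]
      · push_neg at hmk
        rw [hτ m hmk.1 hmk.2, hσ m hmi.1 hmi.2]
  have hfun : (fun m => c (τ m) * b m) = (fun m => b (σ m) * c m) := by
    funext m
    by_cases hmi : m = i ∨ m = j
    · have hmk : m ≠ k ∧ m ≠ l := by
        rcases hmi with h | h <;> subst h <;> exact ⟨by assumption, by assumption⟩
      rw [hτ m hmk.1 hmk.2, hb m hmk.1 hmk.2]
      rcases hσin m hmi with h | h
      · rw [hb (σ m) (h ▸ hik) (h ▸ hil)]; ring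
      · rw [hb (σ m) (h ▸ hjk) (h ▸ hjl)]; ring
    · push_neg at hmi
      rw [hσ m hmi.1 hmi.2, hc m hmi.1 hmi.2]
      by_cases hmk : m = k ∨ m = l
      · rcases hτin m hmk with h | h
        · rw [hc (τ m) (h.symm ▸ hik.symm) (h.symm ▸ hjk.symm)]; ring
        · rw [hc (τ m) (h.symm ▸ hil.symm) (h.symm ▸ hjl.symm)]; ring
      · push_neg at hmk
        rw [hτ m hmk.1 hmk.2, hb m hmk.1 hmk.2, hc m hmi.1 hmi.2]
  rw [hperm, hfun]

end Aux
section Aux2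

variable {d e r : ℕ}

/-- Generators: elements of `G(de,e,r)` supported on at most two coordinates. -/
def Gen (d e r : ℕ) : Set (Gdeer d e r) :=
  {g | ∃ i j : Fin r, ∀ m : Fin r, m ≠ i → m ≠ j → ∀ i',
    ((g : GL (Fin r) ℂ) : Matrix (Fin r) (Fin r) ℂ) i' m
      = (1 : Matrix (Fin r) (Fin r) ℂ) i' m}

lemma one_ne' : ∀ j : Fin r, (1 : Fin r → ℂ) j ≠ 0 := fun _ => one_ne_zero

lemma perm_mem (σ : Equiv.Perm (Fin r)) : monoUnit σ 1 one_ne' ∈ Gdeer d e r :=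
  monoUnit_mem d e σ 1 one_ne' (fun _ => one_pow _) (by simp)

/-- The permutation-matrix element of `Gdeer`. -/
def permElem (d e : ℕ) (σ : Equiv.Perm (Fin r)) : Gdeer d e r :=
  ⟨monoUnit σ 1 one_ne', perm_mem σ⟩

lemma permElem_mul (σ τ : Equiv.Perm (Fin r)) :
    permElem d e (σ * τ) = permElem d e σ * permElem d e τ := by
  apply Subtype.ext; apply Units.ext
  show monoMat (σ * τ) 1 = monoMat σ 1 * monoMat τ 1
  have h : (fun j => (1 : Fin r → ℂ) (τ j) * (1 : Fin r → ℂ) j) = (1 : Fin r → ℂ) := by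
    funext j; simp
  rw [monoMat_mul, h]

lemma permElem_swap_mem_gen (x y : Fin r) :
    permElem d e (Equiv.swap x y) ∈ Gen d e r := by
  refine ⟨x, y, fun m hmx hmy i' => ?_⟩
  show monoMat (Equiv.swap x y) 1 i' m = _
  have hsw : Equiv.swap x y m = m := Equiv.swap_apply_of_ne_of_ne hmx hmy
  simp only [monoMat, Matrix.of_apply, hsw, Matrix.one_apply, Pi.one_apply]

lemma permElem_mem_closure (σ : Equiv.Perm (Fin r)) :
    permElem d e σ ∈ Subgroup.closure (Gen d e r) := by
  refine Equiv.Perm.swap_induction_on σ ?_ ?_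
  · have : permElem d e (1 : Equiv.Perm (Fin r)) = 1 := by
      apply Subtype.ext; apply Units.ext
      show monoMat 1 1 = 1
      exact monoMat_one
    rw [this]; exact one_mem _
  · intro f x y hxy ih
    rw [permElem_mul]
    exact mul_mem (Subgroup.subset_closure (permElem_swap_mem_gen x y)) ih

/-- Diagonal elements, as elements of `Gdeer`. -/
def diagElem (d e : ℕ) (c : Fin r → ℂ) (hc : ∀ j, c j ≠ 0)
    (h1 : ∀ i, c i ^ (d * e) = 1) (h2 : (∏ i, c i) ^ d = 1) : Gdeer d e r :=
  ⟨monoUnit 1 c hc, monoUnit_mem d e 1 c hc h1 h2⟩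

lemma diagElem_mul (c b : Fin r → ℂ) (hc hb h1c h1b h2c h2b) :
    (diagElem d e (fun j => c j * b j)
      (fun j => mul_ne_zero (hc j) (hb j))
      (fun i => by rw [mul_pow, h1c, h1b, mul_one])
      (by rw [Finset.prod_mul_distrib, mul_pow, h2c, h2b, mul_one]) : Gdeer d e r)
    = diagElem d e c hc h1c h2c * diagElem d e b hb h1b h2b := by
  apply Subtype.ext; apply Units.ext
  show monoMat 1 (fun j => c j * b j) = monoMat 1 c * monoMat 1 b
  have h : (fun j => c ((1 : Equiv.Perm (Fin r)) j) * b j) = (fun j => c j * b j) := by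
    funext j; simp
  rw [monoMat_mul, h, one_mul]

end Aux2
section Aux3

variable {d e r : ℕ}

lemma diag_mem_gen (c : Fin r → ℂ) (hc h1 h2) (a b : Fin r)
    (hsupp : ∀ m, m ≠ a → m ≠ b → c m = 1) :
    (diagElem d e c hc h1 h2 : Gdeer d e r) ∈ Gen d e r := by
  refine ⟨a, b, fun m hma hmb i' => ?_⟩
  show monoMat 1 c i' m = _
  simp only [monoMat, Matrix.of_apply, Matrix.one_apply, Equiv.Perm.one_apply,
    hsupp m hma hmb]

lemma diag_mem_closure_aux (hd : 1 ≤ d) (he : 1 ≤ e) (hr0 : 0 < r)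
    (L : Fin r) (s : Finset (Fin r)) :
    ∀ (c : Fin r → ℂ) (hc : ∀ j, c j ≠ 0) (h1 : ∀ i, c i ^ (d * e) = 1)
      (h2 : (∏ i, c i) ^ d = 1), (∀ m, m ∉ s → m ≠ L → c m = 1) →
      diagElem d e c hc h1 h2 ∈ Subgroup.closure (Gen d e r) := by
  induction s using Finset.induction_on with
  | empty =>
    intro c hc h1 h2 hsupp
    exact Subgroup.subset_closure
      (diag_mem_gen c hc h1 h2 L L (fun m hm _ => hsupp m (Finset.notMem_empty m) hm))
  | insert a s ha ih =>
    intro c hc h1 h2 hsupp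
    by_cases hal : a = L
    · refine ih c hc h1 h2 (fun m hms hmL => hsupp m ?_ hmL)
      simp only [Finset.mem_insert, not_or]
      exact ⟨hal ▸ hmL, hms⟩
    · set g : Fin r → ℂ := fun m => if m = a then c a else if m = L then (c a)⁻¹ else 1
        with hgdef
      set c' : Fin r → ℂ := fun m => if m = a then 1 else if m = L then c a * c L else c m
        with hc'def
      have hmulfun : ∀ m, g m * c' m = c m := by
        intro m
        by_cases hma : m = a
        · subst hma; simp [hgdef, hc'def]
        · by_cases hmL : m = L
          · subst hmL
            simp only [hgdef, hc'def, if_neg hma, if_pos rfl, if_true]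
            rw [inv_mul_cancel_left₀ (hc a)]
          · simp [hgdef, hc'def, hma, hmL]
      have hgne : ∀ j, g j ≠ 0 := by
        intro j
        simp only [hgdef]
        split
        · exact hc a
        · split
          · exact inv_ne_zero (hc a)
          · exact one_ne_zero
      have hg1 : ∀ i, g i ^ (d * e) = 1 := by
        intro i
        simp only [hgdef]
        split
        · exact h1 a
        · split
          · rw [inv_pow, h1 a, inv_one]
          · exact one_pow _
      have hgprod : ∏ m, g m = 1 := by
        have hsub : ∏ m ∈ ({a, L} : Finset (Fin r)), g m = ∏ m, g m := by
          refine Finset.prod_subset (Finset.subset_univ _) (fun x _ hx => ?_)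
          simp only [Finset.mem_insert, Finset.mem_singleton, not_or] at hx
          simp [hgdef, hx.1, hx.2]
        rw [← hsub, Finset.prod_pair hal]
        simp [hgdef, if_neg hal, Ne.symm hal, mul_inv_cancel₀ (hc a)]
      have hg2 : (∏ m, g m) ^ d = 1 := by rw [hgprod, one_pow]
      have hc'ne : ∀ j, c' j ≠ 0 := by
        intro j
        simp only [hc'def]
        split
        · exact one_ne_zero
        · split
          · exact mul_ne_zero (hc a) (hc L)
          · exact hc j
      have hc'1 : ∀ i, c' i ^ (d * e) = 1 := by
        intro i
        simp only [hc'def]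
        split
        · exact one_pow _
        · split
          · rw [mul_pow, h1 a, h1 L, mul_one]
          · exact h1 i
      have hc'prodeq : ∏ m, c' m = ∏ m, c m := by
        calc ∏ m, c' m = ∏ m, g m * c' m := by rw [Finset.prod_mul_distrib, hgprod, one_mul]
        _ = ∏ m, c m := Finset.prod_congr rfl (fun m _ => hmulfun m)
      have hc'2 : (∏ m, c' m) ^ d = 1 := by rw [hc'prodeq]; exact h2
      have hc'supp : ∀ m, m ∉ s → m ≠ L → c' m = 1 := by
        intro m hms hmL
        by_cases hma : m = a
        · simp [hc'def, hma]
        · have : m ∉ insert a s := by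
            simp only [Finset.mem_insert, not_or]; exact ⟨hma, hms⟩
          simp only [hc'def, if_neg hma, if_neg hmL]
          exact hsupp m this hmL
      have hkey : diagElem d e c hc h1 h2
          = diagElem d e g hgne hg1 hg2 * diagElem d e c' hc'ne hc'1 hc'2 := by
        apply Subtype.ext; apply Units.ext
        show monoMat 1 c = monoMat 1 g * monoMat 1 c'
        rw [monoMat_mul, one_mul]
        have : (fun j => g ((1 : Equiv.Perm (Fin r)) j) * c' j) = c := by
          funext j
          simpa using hmulfun j
        rw [this]
      rw [hkey]
      refine mul_mem (Subgroup.subset_closure ?_) (ih c' hc'ne hc'1 hc'2 hc'supp)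
      exact diag_mem_gen g hgne hg1 hg2 a L (fun m hma hmL => by
        simp [hgdef, hma, hmL])

lemma mem_closure_gen (hd : 1 ≤ d) (he : 1 ≤ e) (hr0 : 0 < r) (g : Gdeer d e r) :
    g ∈ Subgroup.closure (Gen d e r) := by
  obtain ⟨σ, c, h1, h2, hval⟩ := g.2
  have hde : d * e ≠ 0 := by positivity
  have hc : ∀ j, c j ≠ 0 := fun j => ne_zero_of_pow_eq_one hde (h1 j)
  have hg : g = permElem d e σ * diagElem d e c hc h1 h2 := by
    apply Subtype.ext; apply Units.ext
    show ((g : GL (Fin r) ℂ) : Matrix (Fin r) (Fin r) ℂ)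
      = ((monoUnit σ 1 one_ne' * monoUnit 1 c hc : GL (Fin r) ℂ) : Matrix (Fin r) (Fin r) ℂ)
    rw [hval, Units.val_mul, monoUnit_val, monoUnit_val, monoMat_mul, mul_one]
    have : (fun j => (1 : Fin r → ℂ) ((1 : Equiv.Perm (Fin r)) j) * c j) = c := by
      funext j; simp
    rw [this]
  rw [hg]
  exact mul_mem (permElem_mem_closure σ)
    (diag_mem_closure_aux hd he hr0 ⟨r - 1, by omega⟩ Finset.univ c hc h1 h2
      (fun m hm _ => absurd (Finset.mem_univ m) hm))

end Aux3
section Aux4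

variable {d e r : ℕ}

lemma perm_mul_apply (π : Equiv.Perm (Fin r)) (A : Matrix (Fin r) (Fin r) ℂ)
    (i j : Fin r) : (monoMat π 1 * A) i j = A (π⁻¹ i) j := by
  rw [Matrix.mul_apply]
  rw [Finset.sum_eq_single (π⁻¹ i)]
  · simp [monoMat]
  · intro k _ hk
    have : i ≠ π k := by
      intro h; exact hk (by rw [h]; simp)
    simp [monoMat, this]
  · intro h; exact absurd (Finset.mem_univ _) h

lemma mul_perm_apply (A : Matrix (Fin r) (Fin r) ℂ) (π : Equiv.Perm (Fin r))
    (i j : Fin r) : (A * monoMat π 1) i j = A i (π j) := by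
  rw [Matrix.mul_apply]
  rw [Finset.sum_eq_single (π j)]
  · simp [monoMat]
  · intro k _ hk; simp [monoMat, hk]
  · intro h; exact absurd (Finset.mem_univ _) h

lemma permElem_inv_val (π : Equiv.Perm (Fin r)) :
    ((((permElem d e π)⁻¹ : Gdeer d e r) : GL (Fin r) ℂ) : Matrix (Fin r) (Fin r) ℂ)
      = monoMat π⁻¹ 1 := by
  have h1 : (((permElem d e π)⁻¹ : Gdeer d e r) : GL (Fin r) ℂ)
      = ((permElem d e π : Gdeer d e r) : GL (Fin r) ℂ)⁻¹ := rfl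
  rw [h1]
  show (monoUnit π 1 one_ne' : GL (Fin r) ℂ).inv = monoMat π⁻¹ 1
  show monoMat π⁻¹ (fun j => ((1 : Fin r → ℂ) (π⁻¹ j))⁻¹) = monoMat π⁻¹ 1
  have hfun : (fun j => ((1 : Fin r → ℂ) (π⁻¹ j))⁻¹) = (1 : Fin r → ℂ) := by
    funext j; simp
  rw [hfun]

/-- The key conjugation trick: commutativity of images of elements fixing a common
column `m`, obtained by conjugating into the stabilizer of the last coordinate. -/
lemma pcomm_common (hr : 4 ≤ r) {Q : Type*} [Group Q] (p : Gdeer d e r →* Q)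
    (hcomm : ∀ a b : Gdeer d e r, FixesLastVectors 1 (a : GL (Fin r) ℂ) →
      FixesLastVectors 1 (b : GL (Fin r) ℂ) → p a * p b = p b * p a)
    (g h : Gdeer d e r) (m : Fin r)
    (hg : ∀ i, ((g : GL (Fin r) ℂ) : Matrix (Fin r) (Fin r) ℂ) i m
      = (1 : Matrix (Fin r) (Fin r) ℂ) i m)
    (hh : ∀ i, ((h : GL (Fin r) ℂ) : Matrix (Fin r) (Fin r) ℂ) i m
      = (1 : Matrix (Fin r) (Fin r) ℂ) i m) :
    p g * p h = p h * p g := by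
  set L : Fin r := ⟨r - 1, by omega⟩ with hL
  set π : Equiv.Perm (Fin r) := Equiv.swap m L with hπ
  set t : Gdeer d e r := permElem d e π with ht
  have conjfix : ∀ x : Gdeer d e r,
      (∀ i, ((x : GL (Fin r) ℂ) : Matrix (Fin r) (Fin r) ℂ) i m
        = (1 : Matrix (Fin r) (Fin r) ℂ) i m) →
      FixesLastVectors 1 ((t * x * t⁻¹ : Gdeer d e r) : GL (Fin r) ℂ) := by
    intro x hx j hj i
    have hjL : j = L := by
      apply Fin.ext
      have := j.isLt
      simp only [hL]
      omega
    subst hjL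
    have hval : (((t * x * t⁻¹ : Gdeer d e r) : GL (Fin r) ℂ) : Matrix (Fin r) (Fin r) ℂ)
        = monoMat π 1 * ((x : GL (Fin r) ℂ) : Matrix (Fin r) (Fin r) ℂ) * monoMat π⁻¹ 1 := by
      have : (((t * x * t⁻¹ : Gdeer d e r) : GL (Fin r) ℂ) : Matrix (Fin r) (Fin r) ℂ)
          = ((t : GL (Fin r) ℂ) : Matrix (Fin r) (Fin r) ℂ)
            * ((x : GL (Fin r) ℂ) : Matrix (Fin r) (Fin r) ℂ)
            * (((t⁻¹ : Gdeer d e r) : GL (Fin r) ℂ) : Matrix (Fin r) (Fin r) ℂ) := by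
        push_cast
        rfl
      rw [this, permElem_inv_val]
      rfl
    rw [hval, mul_perm_apply, perm_mul_apply]
    have hπL : π⁻¹ L = m := by rw [hπ, Equiv.swap_inv]; exact Equiv.swap_apply_right m L
    rw [hπL, hx (π⁻¹ i)]
    have hiff : π⁻¹ i = m ↔ i = L := by
      constructor
      · intro hh'
        have : i = π m := by rw [← hh']; simp
      
        rw [this, hπ]; exact Equiv.swap_apply_left m L
      · intro hh'; rw [hh', hπL]
    simp only [Matrix.one_apply]
    by_cases hcase : i = L
    · rw [if_pos hcase, if_pos (hiff.mpr hcase)]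
    · rw [if_neg hcase, if_neg (fun hh' => hcase (hiff.mp hh'))]
  have h1 := hcomm (t * g * t⁻¹) (t * h * t⁻¹) (conjfix g hg) (conjfix h hh)
  simp only [_root_.map_mul, _root_.map_inv] at h1
  have e1 : ∀ X Y : Q, (p t * X * (p t)⁻¹) * (p t * Y * (p t)⁻¹)
      = p t * (X * Y) * (p t)⁻¹ := by intro X Y; group
  rw [e1, e1] at h1
  exact mul_left_cancel (mul_right_cancel h1)

lemma card_triple_le (x y z : Fin r) : ({x, y, z} : Finset (Fin r)).card ≤ 3 := by
  apply le_trans (Finset.card_insert_le _ _)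
  apply Nat.succ_le_succ
  apply le_trans (Finset.card_insert_le _ _)
  simp

lemma pcomm_gen (hd : 1 ≤ d) (he : 1 ≤ e) (hr : 4 ≤ r) {Q : Type*} [Group Q]
    (p : Gdeer d e r →* Q)
    (hcomm : ∀ a b : Gdeer d e r, FixesLastVectors 1 (a : GL (Fin r) ℂ) →
      FixesLastVectors 1 (b : GL (Fin r) ℂ) → p a * p b = p b * p a)
    (g h : Gdeer d e r) (hg : g ∈ Gen d e r) (hh : h ∈ Gen d e r) :
    p g * p h = p h * p g := by
  obtain ⟨i, j, hgf⟩ := hg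
  obtain ⟨k, l, hhf⟩ := hh
  by_cases hsep : i ≠ k ∧ i ≠ l ∧ j ≠ k ∧ j ≠ l
  · obtain ⟨hik, hil, hjk, hjl⟩ := hsep
    obtain ⟨σ, c, _, _, hgv⟩ := g.2
    obtain ⟨τ, b, _, _, hhv⟩ := h.2
    have hgs : ∀ m, m ≠ i → m ≠ j → σ m = m ∧ c m = 1 := fun m h1 h2 =>
      fix_spec σ c m (fun i' => by rw [← hgv]; exact hgf m h1 h2 i')
    have hhs : ∀ m, m ≠ k → m ≠ l → τ m = m ∧ b m = 1 := fun m h1 h2 =>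
      fix_spec τ b m (fun i' => by rw [← hhv]; exact hhf m h1 h2 i')
    have hmul : g * h = h * g := by
      apply Subtype.ext; apply Units.ext
      show (((g * h : Gdeer d e r) : GL (Fin r) ℂ) : Matrix (Fin r) (Fin r) ℂ)
        = (((h * g : Gdeer d e r) : GL (Fin r) ℂ) : Matrix (Fin r) (Fin r) ℂ)
      push_cast
      rw [hgv, hhv]
      exact monoMat_comm_of_disjoint (fun m h1 h2 => (hgs m h1 h2).1)
        (fun m h1 h2 => (hgs m h1 h2).2) (fun m h1 h2 => (hhs m h1 h2).1)
        (fun m h1 h2 => (hhs m h1 h2).2) hik hil hjk hjl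
    rw [← _root_.map_mul, ← _root_.map_mul, hmul]
  · rw [not_and_or, not_and_or, not_and_or, not_not, not_not, not_not, not_not] at hsep
    have hcard : ({i, j, k, l} : Finset (Fin r)).card ≤ 3 := by
      rcases hsep with h' | h' | h' | h'
      · subst h'
        exact le_trans (Finset.card_le_card (by intro x; simp only [Finset.mem_insert, Finset.mem_singleton]; tauto)) (card_triple_le i j l)
      · subst h'
        exact le_trans (Finset.card_le_card (by intro x; simp only [Finset.mem_insert, Finset.mem_singleton]; tauto)) (card_triple_le i j k)
      · subst h'
        exact le_trans (Finset.card_le_card (by intro x; simp only [Finset.mem_insert, Finset.mem_singleton]; tauto)) (card_triple_le i j l)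
      · subst h'
        exact le_trans (Finset.card_le_card (by intro x; simp only [Finset.mem_insert, Finset.mem_singleton]; tauto)) (card_triple_le i j k)
    have hne : (({i, j, k, l} : Finset (Fin r))ᶜ).Nonempty := by
      rw [← Finset.card_pos, Finset.card_compl]
      have hcf : Fintype.card (Fin r) = r := Fintype.card_fin r
      omega
    obtain ⟨m, hm⟩ := hne
    simp only [Finset.mem_compl, Finset.mem_insert, Finset.mem_singleton, not_or] at hm
    exact pcomm_common hr p hcomm g h m (hgf m hm.1 hm.2.1) (hhf m hm.2.2.1 hm.2.2.2)

end Aux4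
/-- If `r ≥ 4` and `p : G(de,e,r) → Q` is a group homomorphism whose image of the
standardly embedded subgroup `G(de,e,r-1)` is commutative, then the image of the whole
group `G(de,e,r)` is commutative. -/
theorem image_commutative_of_image_commutative_on_sub (d e r : ℕ)
    (hd : 1 ≤ d) (he : 1 ≤ e) (hr : 4 ≤ r)
    (Q : Type*) [Group Q] (p : Gdeer d e r →* Q)
    (hcomm : ∀ a b : Gdeer d e r, FixesLastVectors 1 (a : GL (Fin r) ℂ) →
      FixesLastVectors 1 (b : GL (Fin r) ℂ) → p a * p b = p b * p a) :
    ∀ a b : Gdeer d e r, p a * p b = p b * p a := by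
  intro a b
  have ha := mem_closure_gen hd he (by omega) a
  have hb := mem_closure_gen hd he (by omega) b
  refine Subgroup.closure_induction₂
    (p := fun x y _ _ => Commute (p x) (p y)) ?_ ?_ ?_ ?_ ?_ ?_ ?_ ha hb
  · intro x y hx hy
    exact pcomm_gen hd he hr p hcomm x y hx hy
  · intro x _; rw [_root_.map_one]; exact Commute.one_left _
  · intro x _; rw [_root_.map_one]; exact Commute.one_right _
  · intro x y z _ _ _ h1 h2; rw [_root_.map_mul]; exact h1.mul_left h2
  · intro y z x _ _ _ h1 h2; rw [_root_.map_mul]; exact h1.mul_right h2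
  · intro x y _ _ h1; rw [_root_.map_inv]; exact h1.inv_left
  · intro x y _ _ h1; rw [_root_.map_inv]; exact h1.inv_right
end
end

section
/- Let d, e ≥ 1 and r ≥ 2. If ρ is an irreducible finite-dimensional complex representation of G(de,e,r+1) with dim ρ > 1, then the restriction of ρ to the subgroup G(de,e,r−1) (embedded as the subgroup fixing the last two standard basis vectors) is not irreducible. -/
noncomputable section

open Matrix

/-! ### Auxiliary development -/

section Aux

variable {n : ℕ}

lemma monoMat_congr {σ τ : Equiv.Perm (Fin n)} {c b : Fin n → ℂ}
    (h1 : σ = τ) (h2 : c = b) : monoMat σ c = monoMat τ b := by rw [h1, h2]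

lemma ne_zero_of_pow_eq_one_s7 {c : ℂ} {m : ℕ} (h : c ^ m = 1) (hm : m ≠ 0) : c ≠ 0 := by
  intro h0
  rw [h0, zero_pow hm] at h
  exact zero_ne_one h

/-- A monomial matrix with nonvanishing coefficients, as an element of `GL`. -/
def monoGL (σ : Equiv.Perm (Fin n)) (c : Fin n → ℂ) (hc : ∀ j, c j ≠ 0) :
    GL (Fin n) ℂ where
  val := monoMat σ c
  inv := monoMat σ⁻¹ (fun j => (c (σ⁻¹ j))⁻¹)
  val_inv := by
    rw [monoMat_mul, mul_inv_cancel]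
    have h : (fun j => c (σ⁻¹ j) * (c (σ⁻¹ j))⁻¹) = (1 : Fin n → ℂ) := by
      funext j; exact mul_inv_cancel₀ (hc _)
    rw [h, monoMat_one]
  inv_val := by
    rw [monoMat_mul, inv_mul_cancel]
    have h : (fun j => (c (σ⁻¹ (σ j)))⁻¹ * c j) = (1 : Fin n → ℂ) := by
      funext j; rw [Equiv.Perm.inv_def, Equiv.symm_apply_apply]; exact inv_mul_cancel₀ (hc _)
    rw [h, monoMat_one]

@[simp] lemma monoGL_val (σ : Equiv.Perm (Fin n)) (c : Fin n → ℂ) (hc : ∀ j, c j ≠ 0) :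
    ((monoGL σ c hc : GL (Fin n) ℂ) : Matrix (Fin n) (Fin n) ℂ) = monoMat σ c := rfl

@[simp] lemma monoGL_inv_val (σ : Equiv.Perm (Fin n)) (c : Fin n → ℂ) (hc : ∀ j, c j ≠ 0) :
    (((monoGL σ c hc)⁻¹ : GL (Fin n) ℂ) : Matrix (Fin n) (Fin n) ℂ)
      = monoMat σ⁻¹ (fun j => (c (σ⁻¹ j))⁻¹) := rfl

lemma one_fun_ne_zero : ∀ j : Fin n, (1 : Fin n → ℂ) j ≠ 0 := fun _ => one_ne_zero

/-- Permutation matrices as elements of `Gdeer`. -/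
def permG (d e : ℕ) (σ : Equiv.Perm (Fin n)) : Gdeer d e n :=
  ⟨monoGL σ 1 one_fun_ne_zero, σ, 1, by simp, by simp, rfl⟩

/-- Diagonal matrices as elements of `Gdeer`. -/
def diagG (d e : ℕ) (c : Fin n → ℂ) (hc0 : ∀ j, c j ≠ 0)
    (h1 : ∀ i, c i ^ (d * e) = 1) (h2 : (∏ i, c i) ^ d = 1) : Gdeer d e n :=
  ⟨monoGL 1 c hc0, 1, c, h1, h2, rfl⟩

lemma exists_perm_pair {a b i j : Fin n} (hab : a ≠ b) (hij : i ≠ j) :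
    ∃ π : Equiv.Perm (Fin n), π a = i ∧ π b = j := by
  refine ⟨(Equiv.swap (Equiv.swap b j a) i) * Equiv.swap b j, ?_, ?_⟩
  · simp only [Equiv.Perm.mul_apply]
    exact Equiv.swap_apply_left _ i
  · simp only [Equiv.Perm.mul_apply, Equiv.swap_apply_left]
    refine Equiv.swap_apply_of_ne_of_ne ?_ hij.symm
    intro h
    apply hab
    have h2 := congrArg (Equiv.swap b j) h
    rw [Equiv.swap_apply_right, Equiv.swap_apply_self] at h2
    exact h2.symm

lemma perm_swap_comm {a b : Fin n} {σ : Equiv.Perm (Fin n)}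
    (ha : σ a = a) (hb : σ b = b) :
    Equiv.swap a b * σ = σ * Equiv.swap a b := by
  ext x
  simp only [Equiv.Perm.mul_apply]
  rcases eq_or_ne x a with rfl | hxa
  · rw [ha, Equiv.swap_apply_left, hb]
  rcases eq_or_ne x b with rfl | hxb
  · rw [hb, Equiv.swap_apply_right, ha]
  have h1 : σ x ≠ a := fun h => hxa (σ.injective (h.trans ha.symm))
  have h2 : σ x ≠ b := fun h => hxb (σ.injective (h.trans hb.symm))
  rw [Equiv.swap_apply_of_ne_of_ne h1 h2, Equiv.swap_apply_of_ne_of_ne hxa hxb]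

lemma coeff_swap {a b : Fin n} {c : Fin n → ℂ} (ha : c a = 1) (hb : c b = 1)
    (j : Fin n) : c (Equiv.swap a b j) = c j := by
  rcases eq_or_ne j a with rfl | hja
  · rw [Equiv.swap_apply_left, hb, ha]
  rcases eq_or_ne j b with rfl | hjb
  · rw [Equiv.swap_apply_right, ha, hb]
  rw [Equiv.swap_apply_of_ne_of_ne hja hjb]

lemma swap_mat_comm {a b : Fin n} (σ : Equiv.Perm (Fin n)) (cw : Fin n → ℂ)
    (hσa : σ a = a) (hσb : σ b = b) (hca : cw a = 1) (hcb : cw b = 1) :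
    monoMat (Equiv.swap a b) 1 * monoMat σ cw = monoMat σ cw * monoMat (Equiv.swap a b) 1 := by
  rw [monoMat_mul, monoMat_mul]
  refine monoMat_congr (perm_swap_comm hσa hσb) ?_
  funext j
  simp only [Pi.one_apply, one_mul, mul_one]
  exact (coeff_swap hca hcb j).symm

lemma diag_mat_comm {a b : Fin n} (σ : Equiv.Perm (Fin n)) (cw g : Fin n → ℂ)
    (hσa : σ a = a) (hσb : σ b = b) (hg : ∀ k, k ≠ a → k ≠ b → g k = 1) :
    monoMat 1 g * monoMat σ cw = monoMat σ cw * monoMat 1 g := by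
  rw [monoMat_mul, monoMat_mul, one_mul, mul_one]
  refine monoMat_congr rfl ?_
  funext j
  have hgs : g (σ j) = g j := by
    rcases eq_or_ne j a with rfl | hja
    · rw [hσa]
    rcases eq_or_ne j b with rfl | hjb
    · rw [hσb]
    have h1 : σ j ≠ a := fun h => hja (σ.injective (h.trans hσa.symm))
    have h2 : σ j ≠ b := fun h => hjb (σ.injective (h.trans hσb.symm))
    rw [hg _ h1 h2, hg _ hja hjb]
  simp only [Equiv.Perm.one_apply]
  rw [hgs, mul_comm]

end Aux

section Rep

variable {d e r : ℕ} {U : Type*} [AddCommGroup U] [Module ℂ U] [FiniteDimensional ℂ U]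
variable (ρ : Representation ℂ (Gdeer d e (r + 1)) U)

/-- `ρ g` is a scalar endomorphism. -/
def IsScal (g : Gdeer d e (r + 1)) : Prop :=
  ∃ μ : ℂ, ρ g = μ • (1 : U →ₗ[ℂ] U)

lemma IsScal.mul {g h : Gdeer d e (r + 1)} (hg : IsScal ρ g) (hh : IsScal ρ h) :
    IsScal ρ (g * h) := by
  obtain ⟨μ, hμ⟩ := hg
  obtain ⟨ν, hν⟩ := hh
  refine ⟨μ * ν, ?_⟩
  rw [_root_.map_mul, hμ, hν, smul_mul_assoc, mul_smul_comm, smul_smul, one_mul]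

variable {ρ}

/-- Schur's lemma for the restriction. -/
lemma schur_scal
    (hH : ∀ p : Submodule ℂ U,
      (∀ w : Gdeer d e (r + 1), FixesLastVectors 2 (w : GL (Fin (r + 1)) ℂ) →
        ∀ v ∈ p, ρ w v ∈ p) → p = ⊥ ∨ p = ⊤)
    [Nontrivial U] (f : U →ₗ[ℂ] U)
    (hf : ∀ w : Gdeer d e (r + 1), FixesLastVectors 2 (w : GL (Fin (r + 1)) ℂ) →
      f * ρ w = ρ w * f) :
    ∃ μ : ℂ, f = μ • (1 : U →ₗ[ℂ] U) := by
  obtain ⟨μ, hμ⟩ := Module.End.exists_eigenvalue (f : Module.End ℂ U)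
  refine ⟨μ, ?_⟩
  have hinv : ∀ w : Gdeer d e (r + 1), FixesLastVectors 2 (w : GL (Fin (r + 1)) ℂ) →
      ∀ v ∈ Module.End.eigenspace f μ, ρ w v ∈ Module.End.eigenspace f μ := by
    intro w hw v hv
    rw [Module.End.mem_eigenspace_iff] at hv ⊢
    have : f (ρ w v) = ρ w (f v) := by
      have := hf w hw
      calc f (ρ w v) = (f * ρ w) v := rfl
        _ = (ρ w * f) v := by rw [this]
        _ = ρ w (f v) := rfl
    rw [this, hv, _root_.map_smul]
  rcases hH _ hinv with h | h
  · exact absurd h hμ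
  · ext v
    have hv : v ∈ Module.End.eigenspace f μ := h ▸ Submodule.mem_top
    rw [Module.End.mem_eigenspace_iff] at hv
    simpa using hv

lemma scal_of_conj_comm
    (hH : ∀ p : Submodule ℂ U,
      (∀ w : Gdeer d e (r + 1), FixesLastVectors 2 (w : GL (Fin (r + 1)) ℂ) →
        ∀ v ∈ p, ρ w v ∈ p) → p = ⊥ ∨ p = ⊤)
    [Nontrivial U] (t g : Gdeer d e (r + 1))
    (hc : ∀ w : Gdeer d e (r + 1), FixesLastVectors 2 (w : GL (Fin (r + 1)) ℂ) →
      t * (g * w * g⁻¹) = (g * w * g⁻¹) * t) :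
    IsScal ρ t := by
  have hf : ∀ w : Gdeer d e (r + 1), FixesLastVectors 2 (w : GL (Fin (r + 1)) ℂ) →
      ρ (g⁻¹ * t * g) * ρ w = ρ w * ρ (g⁻¹ * t * g) := by
    intro w hw
    rw [← _root_.map_mul, ← _root_.map_mul]
    congr 1
    calc (g⁻¹ * t * g) * w = g⁻¹ * (t * (g * w * g⁻¹)) * g := by group
      _ = g⁻¹ * ((g * w * g⁻¹) * t) * g := by rw [hc w hw]
      _ = w * (g⁻¹ * t * g) := by group
  obtain ⟨μ, hμ⟩ := schur_scal hH (ρ (g⁻¹ * t * g)) hf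
  refine ⟨μ, ?_⟩
  have ht : t = g * (g⁻¹ * t * g) * g⁻¹ := by group
  calc ρ t = ρ g * ρ (g⁻¹ * t * g) * ρ g⁻¹ := by
        rw [← _root_.map_mul, ← _root_.map_mul, ← ht]
    _ = ρ g * (μ • (1 : U →ₗ[ℂ] U)) * ρ g⁻¹ := by rw [hμ]
    _ = μ • (ρ g * ρ g⁻¹) := by
        rw [mul_smul_comm, mul_one, smul_mul_assoc]
    _ = μ • (1 : U →ₗ[ℂ] U) := by rw [← _root_.map_mul, mul_inv_cancel, _root_.map_one]

/-- Structure of elements fixing the last two basis vectors. -/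
lemma fixes_cols (hd : 1 ≤ d) (he : 1 ≤ e) (hr : 2 ≤ r)
    {w : Gdeer d e (r + 1)} (hw : FixesLastVectors 2 (w : GL (Fin (r + 1)) ℂ)) :
    ∃ (σ : Equiv.Perm (Fin (r + 1))) (c : Fin (r + 1) → ℂ),
      (∀ i, c i ^ (d * e) = 1) ∧ (∏ i, c i) ^ d = 1 ∧
      ((w : GL (Fin (r + 1)) ℂ) : Matrix (Fin (r + 1)) (Fin (r + 1)) ℂ) = monoMat σ c ∧
      σ ⟨r - 1, by omega⟩ = ⟨r - 1, by omega⟩ ∧ σ ⟨r, by omega⟩ = ⟨r, by omega⟩ ∧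
      c ⟨r - 1, by omega⟩ = 1 ∧ c ⟨r, by omega⟩ = 1 := by
  obtain ⟨σ, c, hcpow, hcprod, hmat⟩ := w.2
  have hme : d * e ≠ 0 := by positivity
  have key : ∀ j : Fin (r + 1), r + 1 - 2 ≤ (j : ℕ) → σ j = j ∧ c j = 1 := by
    intro j hj
    have hcj : c j ≠ 0 := ne_zero_of_pow_eq_one_s7 (hcpow j) hme
    have h1 := hw j hj (σ j)
    rw [hmat] at h1
    simp only [monoMat, Matrix.of_apply, Matrix.one_apply, if_true, eq_self_iff_true] at h1
    by_cases hs : σ j = j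
    · refine ⟨hs, ?_⟩
      rw [h1, if_pos hs]
    · rw [if_neg hs] at h1
      exact absurd h1 hcj
  have h1 := key ⟨r - 1, by omega⟩ (by simp)
  have h2 := key ⟨r, by omega⟩ (by simp)
  exact ⟨σ, c, hcpow, hcprod, hmat, h1.1, h2.1, h1.2, h2.2⟩

/-- The centralizer trick: an element of `Gdeer` commuting with every monomial matrix
whose permutation fixes `a, b` and whose coefficients are `1` at `a, b` acts as a
scalar, provided the restriction to the subgroup fixing the last two vectors is
irreducible. -/
lemma scal_of_pair_comm (hd : 1 ≤ d) (he : 1 ≤ e) (hr : 2 ≤ r)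
    (hH : ∀ p : Submodule ℂ U,
      (∀ w : Gdeer d e (r + 1), FixesLastVectors 2 (w : GL (Fin (r + 1)) ℂ) →
        ∀ v ∈ p, ρ w v ∈ p) → p = ⊥ ∨ p = ⊤)
    [Nontrivial U] {a b : Fin (r + 1)} (hab : a ≠ b) (t : Gdeer d e (r + 1))
    (ht : ∀ (σ : Equiv.Perm (Fin (r + 1))) (cw : Fin (r + 1) → ℂ),
      σ a = a → σ b = b → cw a = 1 → cw b = 1 →
      ((t : GL (Fin (r + 1)) ℂ) : Matrix (Fin (r + 1)) (Fin (r + 1)) ℂ) * monoMat σ cw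
        = monoMat σ cw * ((t : GL (Fin (r + 1)) ℂ) : Matrix (Fin (r + 1)) (Fin (r + 1)) ℂ)) :
    IsScal ρ t := by
  set a0 : Fin (r + 1) := ⟨r - 1, by omega⟩ with ha0
  set b0 : Fin (r + 1) := ⟨r, by omega⟩ with hb0
  have ha0b0 : a0 ≠ b0 := by
    simp only [ha0, hb0, ne_eq, Fin.mk.injEq]
    omega
  obtain ⟨π, hπa, hπb⟩ := exists_perm_pair ha0b0 hab
  set g : Gdeer d e (r + 1) := permG d e π with hg
  apply scal_of_conj_comm hH t g
  intro w hw
  obtain ⟨σ, c, hcpow, hcprod, hmat, hσa, hσb, hca, hcb⟩ := fixes_cols hd he hr hw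
  have hπia : π⁻¹ a = a0 := by rw [← hπa, Equiv.Perm.inv_def, Equiv.symm_apply_apply]
  have hπib : π⁻¹ b = b0 := by rw [← hπb, Equiv.Perm.inv_def, Equiv.symm_apply_apply]
  have hmat' : (((g * w * g⁻¹ : Gdeer d e (r + 1)) : GL (Fin (r + 1)) ℂ) :
      Matrix (Fin (r + 1)) (Fin (r + 1)) ℂ)
      = monoMat (π * σ * π⁻¹) (fun j => c (π⁻¹ j)) := by
    have hco : (((g * w * g⁻¹ : Gdeer d e (r + 1)) : GL (Fin (r + 1)) ℂ) :
        Matrix (Fin (r + 1)) (Fin (r + 1)) ℂ)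
        = monoMat π 1 * monoMat σ c *
          monoMat π⁻¹ (fun j => ((1 : Fin (r + 1) → ℂ) (π⁻¹ j))⁻¹) := by
      rw [← hmat]
      rfl
    rw [hco, monoMat_mul, monoMat_mul]
    refine monoMat_congr rfl ?_
    funext j
    simp
  have hcomm := ht (π * σ * π⁻¹) (fun j => c (π⁻¹ j))
    (by simp [Equiv.Perm.mul_apply, hπia, hσa, hπa]; rw [show σ a0 = a0 from hσa, hπa])
    (by simp [Equiv.Perm.mul_apply, hπib, hσb, hπb]; rw [show σ b0 = b0 from hσb, hπb])
    (by simp only [hπia]; exact hca)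
    (by simp only [hπib]; exact hcb)
  apply Subtype.ext
  apply Units.ext
  show ((t : GL (Fin (r + 1)) ℂ) : Matrix (Fin (r + 1)) (Fin (r + 1)) ℂ) *
      (((g * w * g⁻¹ : Gdeer d e (r + 1)) : GL (Fin (r + 1)) ℂ) :
        Matrix (Fin (r + 1)) (Fin (r + 1)) ℂ)
    = (((g * w * g⁻¹ : Gdeer d e (r + 1)) : GL (Fin (r + 1)) ℂ) :
        Matrix (Fin (r + 1)) (Fin (r + 1)) ℂ) *
      ((t : GL (Fin (r + 1)) ℂ) : Matrix (Fin (r + 1)) (Fin (r + 1)) ℂ)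
  rw [hmat']
  exact hcomm

lemma isScal_swap (hd : 1 ≤ d) (he : 1 ≤ e) (hr : 2 ≤ r)
    (hH : ∀ p : Submodule ℂ U,
      (∀ w : Gdeer d e (r + 1), FixesLastVectors 2 (w : GL (Fin (r + 1)) ℂ) →
        ∀ v ∈ p, ρ w v ∈ p) → p = ⊥ ∨ p = ⊤)
    [Nontrivial U] {a b : Fin (r + 1)} (hab : a ≠ b) :
    IsScal ρ (permG d e (Equiv.swap a b)) := by
  apply scal_of_pair_comm hd he hr hH hab
  intro σ cw hσa hσb hca hcb
  show monoMat (Equiv.swap a b) 1 * monoMat σ cw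
    = monoMat σ cw * monoMat (Equiv.swap a b) 1
  exact swap_mat_comm σ cw hσa hσb hca hcb

lemma isScal_diagPair (hd : 1 ≤ d) (he : 1 ≤ e) (hr : 2 ≤ r)
    (hH : ∀ p : Submodule ℂ U,
      (∀ w : Gdeer d e (r + 1), FixesLastVectors 2 (w : GL (Fin (r + 1)) ℂ) →
        ∀ v ∈ p, ρ w v ∈ p) → p = ⊥ ∨ p = ⊤)
    [Nontrivial U] {a b : Fin (r + 1)} (hab : a ≠ b) (cg : Fin (r + 1) → ℂ)
    (h0 : ∀ j, cg j ≠ 0) (h1 : ∀ i, cg i ^ (d * e) = 1) (h2 : (∏ i, cg i) ^ d = 1)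
    (hsupp : ∀ k, k ≠ a → k ≠ b → cg k = 1) :
    IsScal ρ (diagG d e cg h0 h1 h2) := by
  apply scal_of_pair_comm hd he hr hH hab
  intro σ cw hσa hσb hca hcb
  show monoMat 1 cg * monoMat σ cw = monoMat σ cw * monoMat 1 cg
  exact diag_mat_comm σ cw cg hσa hσb hsupp

lemma isScal_perm (hd : 1 ≤ d) (he : 1 ≤ e) (hr : 2 ≤ r)
    (hH : ∀ p : Submodule ℂ U,
      (∀ w : Gdeer d e (r + 1), FixesLastVectors 2 (w : GL (Fin (r + 1)) ℂ) →
        ∀ v ∈ p, ρ w v ∈ p) → p = ⊥ ∨ p = ⊤)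
    [Nontrivial U] (σ : Equiv.Perm (Fin (r + 1))) :
    IsScal ρ (permG d e σ) := by
  refine Equiv.Perm.swap_induction_on σ ?_ ?_
  · have h : permG d e (1 : Equiv.Perm (Fin (r + 1))) = 1 := by
      apply Subtype.ext; apply Units.ext
      show monoMat 1 1 = (1 : Matrix (Fin (r + 1)) (Fin (r + 1)) ℂ)
      exact monoMat_one
    rw [h]
    exact ⟨1, by rw [_root_.map_one, one_smul]⟩
  · intro f x y hxy hf
    have h : permG d e (Equiv.swap x y * f)
        = permG d e (Equiv.swap x y) * permG d e f := by
      apply Subtype.ext; apply Units.ext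
      show monoMat (Equiv.swap x y * f) 1 = monoMat (Equiv.swap x y) 1 * monoMat f 1
      rw [monoMat_mul]
      exact monoMat_congr rfl (by funext j; simp)
    rw [h]
    exact IsScal.mul ρ (isScal_swap hd he hr hH hxy) hf

lemma isScal_diag_all (hd : 1 ≤ d) (he : 1 ≤ e) (hr : 2 ≤ r)
    (hH : ∀ p : Submodule ℂ U,
      (∀ w : Gdeer d e (r + 1), FixesLastVectors 2 (w : GL (Fin (r + 1)) ℂ) →
        ∀ v ∈ p, ρ w v ∈ p) → p = ⊥ ∨ p = ⊤)
    [Nontrivial U] (m : ℕ) :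
    ∀ (c : Fin (r + 1) → ℂ) (h0 : ∀ j, c j ≠ 0) (h1 : ∀ i, c i ^ (d * e) = 1)
      (h2 : (∏ i, c i) ^ d = 1),
      (Finset.univ.filter (fun k => k ≠ Fin.last r ∧ c k ≠ 1)).card ≤ m →
      IsScal ρ (diagG d e c h0 h1 h2) := by
  induction m with
  | zero =>
    intro c h0 h1 h2 hcard
    have hempty : (Finset.univ.filter (fun k => k ≠ Fin.last r ∧ c k ≠ 1)) = ∅ :=
      Finset.card_eq_zero.mp (Nat.le_zero.mp hcard)
    have hlast : ∀ k, k ≠ Fin.last r → c k = 1 := by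
      intro k hk
      by_contra hck
      have hkmem : k ∈ (Finset.univ.filter (fun k => k ≠ Fin.last r ∧ c k ≠ 1)) :=
        Finset.mem_filter.mpr ⟨Finset.mem_univ _, hk, hck⟩
      rw [hempty] at hkmem
      exact absurd hkmem (Finset.notMem_empty k)
    have hab : (⟨0, by omega⟩ : Fin (r + 1)) ≠ Fin.last r := by
      simp only [ne_eq, Fin.ext_iff, Fin.val_last]
      omega
    exact isScal_diagPair hd he hr hH hab c h0 h1 h2 (fun k _ hk => hlast k hk)
  | succ m ih =>
    intro c h0 h1 h2 hcard
    by_cases hle : (Finset.univ.filter (fun k => k ≠ Fin.last r ∧ c k ≠ 1)).card ≤ m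
    · exact ih c h0 h1 h2 hle
    obtain ⟨i, hi⟩ := Finset.card_pos.mp (show 0 <
      (Finset.univ.filter (fun k => k ≠ Fin.last r ∧ c k ≠ 1)).card by omega)
    obtain ⟨-, hil, hci⟩ := Finset.mem_filter.mp hi
    set L : Fin (r + 1) := Fin.last r with hL
    set c1 : Fin (r + 1) → ℂ :=
      fun k => if k = i then c i else if k = L then (c i)⁻¹ else 1 with hc1
    set c2 : Fin (r + 1) → ℂ :=
      fun k => if k = i then 1 else if k = L then c L * c i else c k with hc2
    have hprod_eq : ∀ k, c1 k * c2 k = c k := by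
      intro k
      rcases eq_or_ne k i with rfl | hki
      · simp [hc1, hc2]
      rcases eq_or_ne k L with rfl | hkL
      · have hLi : L ≠ i := fun h => hil h.symm
        have e1 : c1 L = (c i)⁻¹ := by simp [hc1, hLi]
        have e2 : c2 L = c L * c i := by simp [hc2, hLi]
        rw [e1, e2, mul_comm (c L), ← mul_assoc, inv_mul_cancel₀ (h0 i), one_mul]
      · simp [hc1, hc2, hki, hkL]
    have h01 : ∀ j, c1 j ≠ 0 := by
      intro j
      simp only [hc1]
      split
      · exact h0 i
      split
      · exact inv_ne_zero (h0 i)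
      · exact one_ne_zero
    have h11 : ∀ j, c1 j ^ (d * e) = 1 := by
      intro j
      simp only [hc1]
      split
      · exact h1 i
      split
      · rw [inv_pow, h1 i, inv_one]
      · exact one_pow _
    have hprod1 : ∏ k, c1 k = 1 := by
      have hLmem : L ∈ Finset.univ.erase i :=
        Finset.mem_erase.mpr ⟨fun h => hil h.symm, Finset.mem_univ _⟩
      rw [← Finset.mul_prod_erase Finset.univ c1 (Finset.mem_univ i),
        ← Finset.mul_prod_erase _ c1 hLmem,
        Finset.prod_eq_one (fun k hk => ?_)]
      · have hLi : L ≠ i := fun h => hil h.symm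
        have e1 : c1 i = c i := by simp [hc1]
        have e2 : c1 L = (c i)⁻¹ := by simp [hc1, hLi]
        rw [e1, e2, mul_one, mul_inv_cancel₀ (h0 i)]
      · have hk' := Finset.mem_erase.mp hk
        have hk'' := Finset.mem_erase.mp hk'.2
        simp [hc1, hk''.1, hk'.1]
    have h21 : (∏ k, c1 k) ^ d = 1 := by rw [hprod1, one_pow]
    have h02 : ∀ j, c2 j ≠ 0 := by
      intro j
      simp only [hc2]
      split
      · exact one_ne_zero
      split
      · exact mul_ne_zero (h0 L) (h0 i)
      · exact h0 j
    have h12 : ∀ j, c2 j ^ (d * e) = 1 := by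
      intro j
      simp only [hc2]
      split
      · exact one_pow _
      split
      · rw [mul_pow, h1 L, h1 i, mul_one]
      · exact h1 j
    have hprod2 : ∏ k, c2 k = ∏ k, c k := by
      have h := Finset.prod_congr rfl (fun k (_ : k ∈ Finset.univ) => hprod_eq k)
      rw [Finset.prod_mul_distrib, hprod1, one_mul] at h
      exact h
    have h22 : (∏ k, c2 k) ^ d = 1 := by rw [hprod2]; exact h2
    have hsub : (Finset.univ.filter (fun k => k ≠ Fin.last r ∧ c2 k ≠ 1)) ⊆
        (Finset.univ.filter (fun k => k ≠ Fin.last r ∧ c k ≠ 1)).erase i := by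
      intro k hk
      obtain ⟨-, hkL, hk1⟩ := Finset.mem_filter.mp hk
      have hki : k ≠ i := by
        rintro rfl
        exact hk1 (by simp [hc2])
      refine Finset.mem_erase.mpr ⟨hki, Finset.mem_filter.mpr
        ⟨Finset.mem_univ _, hkL, ?_⟩⟩
      have hc2k : c2 k = c k := by simp [hc2, hki, hkL, hL]
      rwa [hc2k] at hk1
    have hcard2 : (Finset.univ.filter (fun k => k ≠ Fin.last r ∧ c2 k ≠ 1)).card ≤ m := by
      have h := Finset.card_le_card hsub
      rw [Finset.card_erase_of_mem hi] at h
      omega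
    have hsplit : diagG d e c h0 h1 h2
        = diagG d e c1 h01 h11 h21 * diagG d e c2 h02 h12 h22 := by
      apply Subtype.ext; apply Units.ext
      show monoMat 1 c = monoMat 1 c1 * monoMat 1 c2
      rw [monoMat_mul, mul_one]
      refine monoMat_congr rfl ?_
      funext j
      simp only [Equiv.Perm.one_apply]
      exact (hprod_eq j).symm
    rw [hsplit]
    refine IsScal.mul ρ (isScal_diagPair hd he hr hH hil c1 h01 h11 h21 ?_)
      (ih c2 h02 h12 h22 hcard2)
    intro k hki hkL
    simp [hc1, hki, hkL]

lemma isScal_all (hd : 1 ≤ d) (he : 1 ≤ e) (hr : 2 ≤ r)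
    (hH : ∀ p : Submodule ℂ U,
      (∀ w : Gdeer d e (r + 1), FixesLastVectors 2 (w : GL (Fin (r + 1)) ℂ) →
        ∀ v ∈ p, ρ w v ∈ p) → p = ⊥ ∨ p = ⊤)
    [Nontrivial U] (t : Gdeer d e (r + 1)) : IsScal ρ t := by
  obtain ⟨σ, c, h1, h2, hmat⟩ := t.2
  have h0 : ∀ j, c j ≠ 0 := fun j => ne_zero_of_pow_eq_one_s7 (h1 j) (by positivity)
  have ht : t = permG d e σ * diagG d e c h0 h1 h2 := by
    apply Subtype.ext; apply Units.ext
    show ((t : GL (Fin (r + 1)) ℂ) : Matrix (Fin (r + 1)) (Fin (r + 1)) ℂ)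
      = monoMat σ 1 * monoMat 1 c
    rw [hmat, monoMat_mul, mul_one]
    exact monoMat_congr rfl (by funext j; simp)
  rw [ht]
  exact IsScal.mul ρ (isScal_perm hd he hr hH σ)
    (isScal_diag_all hd he hr hH _ c h0 h1 h2 le_rfl)

end Rep


/-- If `ρ` is an irreducible complex representation of `G(de,e,r+1)` of dimension `> 1`
(with `r ≥ 2`), then its restriction to the standardly embedded subgroup `G(de,e,r-1)`
(the elements fixing the last two standard basis vectors) is not irreducible: there is
an invariant subspace distinct from `0` and the whole space. -/
theorem restriction_to_sub_not_irreducible (d e r : ℕ)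
    (hd : 1 ≤ d) (he : 1 ≤ e) (hr : 2 ≤ r)
    (U : Type*) [AddCommGroup U] [Module ℂ U] [FiniteDimensional ℂ U]
    (ρ : Representation ℂ (Gdeer d e (r + 1)) U)
    (hirr : ∀ p : Submodule ℂ U,
      (∀ w : Gdeer d e (r + 1), ∀ v ∈ p, ρ w v ∈ p) → p = ⊥ ∨ p = ⊤)
    (hdim : 1 < Module.finrank ℂ U) :
    ∃ p : Submodule ℂ U,
      (∀ w : Gdeer d e (r + 1), FixesLastVectors 2 (w : GL (Fin (r + 1)) ℂ) →
        ∀ v ∈ p, ρ w v ∈ p) ∧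
      p ≠ ⊥ ∧ p ≠ ⊤ := by
  by_contra hcon
  push_neg at hcon
  have hH : ∀ p : Submodule ℂ U,
      (∀ w : Gdeer d e (r + 1), FixesLastVectors 2 (w : GL (Fin (r + 1)) ℂ) →
        ∀ v ∈ p, ρ w v ∈ p) → p = ⊥ ∨ p = ⊤ := by
    intro p hp
    rcases eq_or_ne p ⊥ with h | h
    · exact Or.inl h
    · exact Or.inr (hcon p hp h)
  haveI hnt : Nontrivial U := by
    have hpos : 0 < Module.finrank ℂ U := by omega
    exact Module.nontrivial_of_finrank_pos hpos
  obtain ⟨v, hv⟩ := exists_ne (0 : U)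
  have hmem : v ∈ (ℂ ∙ v) := Submodule.mem_span_singleton_self v
  have hinv : ∀ w : Gdeer d e (r + 1), ∀ u ∈ (ℂ ∙ v), ρ w u ∈ (ℂ ∙ v) := by
    intro w u hu
    obtain ⟨μ, hμ⟩ := isScal_all hd he hr hH w
    rw [hμ]
    simpa using Submodule.smul_mem _ μ hu
  rcases hirr _ hinv with h | h
  · rw [h] at hmem
    exact hv (by simpa using hmem)
  · have h1 : Module.finrank ℂ ↥(ℂ ∙ v) = 1 := finrank_span_singleton hv
    rw [h, finrank_top] at h1
    omega
end
end

section
/- For n ≥ 1 and z : Fin n → ℂ, let J(z) be the n×n complex matrix with entries J(z)_{k,j} = k·z(j)^{k−1} for 1 ≤ k ≤ n (rows indexed by k, columns by j), i.e. the Jacobian matrix at z of the power-sum map f = (f_1,…,f_n), f_k(z) = Σ_j z(j)^k. Then: (a) J(z) is invertible if and only if z is injective; and (b) for every permutation σ ∈ S_n and every v : Fin n → ℂ one has J(σ·z)(σ·v) = J(z)(v), where (σ·z)(i) = z(σ⁻¹(i)). Hence z ↦ J(z) is a holomorphic equivariant trivialization of the quotient of the trivial bundle X_n × ℂ^n over the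 configuration space X_n = {z | z injective}. -/
open Matrix

/-- The matrix with entries `J(z)_{k,j} = k·z(j)^(k-1)` for `1 ≤ k ≤ n` (row index
`k : Fin n` corresponding to the exponent `k+1`), i.e. the Jacobian matrix at `z` of the
power-sum map `f = (f_1, …, f_n)`, `f_k(z) = Σ_j z(j)^k`. -/
def powerSumJacobian (n : ℕ) (z : Fin n → ℂ) : Matrix (Fin n) (Fin n) ℂ :=
  Matrix.of fun k j => (((k : ℕ) + 1 : ℕ) : ℂ) * z j ^ (k : ℕ)

/-- **The Vandermonde-spiral trivialization.** (a) The Jacobian `J(z)` of the power-sum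
map is invertible exactly when the points `z_1, …, z_n` are pairwise distinct, and
(b) it satisfies the equivariance relation `J(σ·z)(σ·v) = J(z)(v)` for every
permutation `σ`.  Hence `z ↦ J(z)` is a holomorphic equivariant trivialization of the
quotient of the trivial bundle `X_n × ℂ^n` over the configuration space `X_n`. -/
theorem powerSumJacobian_isUnit_iff_and_equivariant (n : ℕ) (hn : 1 ≤ n) :
    (∀ z : Fin n → ℂ, IsUnit (powerSumJacobian n z) ↔ Function.Injective z) ∧
    (∀ (σ : Equiv.Perm (Fin n)) (z v : Fin n → ℂ),
      (powerSumJacobian n (fun i => z (σ⁻¹ i))).mulVec (fun i => v (σ⁻¹ i)) =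
        (powerSumJacobian n z).mulVec v) := by
  constructor
  · intro z
    have hJ : powerSumJacobian n z =
        (Matrix.diagonal fun k : Fin n => (((k : ℕ) + 1 : ℕ) : ℂ)) * (Matrix.vandermonde z)ᵀ := by
      ext k j
      simp [powerSumJacobian, Matrix.mul_apply, Matrix.diagonal, Matrix.vandermonde,
        Finset.sum_eq_single k, mul_comm]
    rw [Matrix.isUnit_iff_isUnit_det, hJ, Matrix.det_mul, Matrix.det_diagonal,
      Matrix.det_transpose]
    rw [isUnit_iff_ne_zero, mul_ne_zero_iff]
    constructor
    · intro h
      exact (Matrix.det_vandermonde_ne_zero_iff).1 h.2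
    · intro h
      refine ⟨Finset.prod_ne_zero_iff.2 fun k _ => ?_, (Matrix.det_vandermonde_ne_zero_iff).2 h⟩
      exact Nat.cast_ne_zero.mpr (Nat.succ_ne_zero _)
  · intro σ z v
    funext k
    simp only [Matrix.mulVec, dotProduct, powerSumJacobian, Matrix.of_apply]
    exact Fintype.sum_equiv σ⁻¹ _ _ fun j => rfl
end

section
/- Let W = G(2,1,4) be the group of signed permutation 4×4 matrices (monomial matrices with nonzero entries ±1), the Coxeter group of type B_4 inside GL_4(ℂ). The subring of the ring of functions W → ℂ generated by all one-dimensional characters (group homomorphisms W → ℂ^×) together with the characters of the exterior powers Λ^k(ℂ⁴) of the natural four-dimensional representation, 0 ≤ k ≤ 4, does NOT contain the character of every irreducible complex representation of W: there exists an irreducible character of W not lying in this subring. -/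
noncomputable section

open Matrix

/-- Functorial action of a linear endomorphism on the `k`-th exterior power. -/
def extPowMap (k : ℕ) {M : Type*} [AddCommGroup M] [Module ℂ M]
    (g : M →ₗ[ℂ] M) : ⋀[ℂ]^k M →ₗ[ℂ] ⋀[ℂ]^k M :=
  ((ExteriorAlgebra.map g).toLinearMap).restrict (p := ⋀[ℂ]^k M) (q := ⋀[ℂ]^k M)
    (fun x hx => by
      have h2 : Submodule.map (ExteriorAlgebra.map g).toLinearMap
          (LinearMap.range (ExteriorAlgebra.ι ℂ : M →ₗ[ℂ] ExteriorAlgebra ℂ M)) ≤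
          LinearMap.range (ExteriorAlgebra.ι ℂ : M →ₗ[ℂ] ExteriorAlgebra ℂ M) := by
        rw [ExteriorAlgebra.ι_range_map_map]
        rintro y ⟨m, _, rfl⟩
        exact ⟨m, rfl⟩
      have h3 : ∀ m : ℕ, (Submodule.map (ExteriorAlgebra.map g).toLinearMap
          (LinearMap.range (ExteriorAlgebra.ι ℂ : M →ₗ[ℂ] ExteriorAlgebra ℂ M)))^m ≤
          (LinearMap.range (ExteriorAlgebra.ι ℂ : M →ₗ[ℂ] ExteriorAlgebra ℂ M))^m := by
        intro m
        induction m with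
        | zero => simp
        | succ m ih => rw [pow_succ, pow_succ]; exact mul_le_mul' ih h2
      have h1 : Submodule.map (ExteriorAlgebra.map g).toLinearMap (⋀[ℂ]^k M) ≤ ⋀[ℂ]^k M := by
        rw [Submodule.map_pow]
        exact h3 k
      exact h1 ⟨x, hx, rfl⟩)

namespace B4aux

def p1 : Fin 6 → Fin 4 := ![0,0,0,1,1,2]
def p2 : Fin 6 → Fin 4 := ![1,2,3,2,3,3]
def idx : Fin 4 → Fin 4 → Fin 6 := fun a b =>
  ![![0,0,1,2], ![0,0,3,4], ![1,3,0,5], ![2,4,5,0]] a b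

lemma pair_ne : ∀ T, p1 T ≠ p2 T := by decide
lemma idx_p : ∀ T, idx (p1 T) (p2 T) = T := by decide
lemma idx_symm : ∀ x y, idx x y = idx y x := by decide
lemma eq_idx_iff : ∀ (x y : Fin 4), x ≠ y → ∀ T : Fin 6,
    (T = idx x y ↔ (p1 T = x ∧ p2 T = y) ∨ (p1 T = y ∧ p2 T = x)) := by decide

def F (σ : Equiv.Perm (Fin 4)) (S : Fin 6) : Fin 6 := idx (σ (p1 S)) (σ (p2 S))

lemma F_comp (σ τ : Equiv.Perm (Fin 4)) (S : Fin 6) : F σ (F τ S) = F (σ * τ) S := by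
  have hne : τ (p1 S) ≠ τ (p2 S) := fun h => pair_ne S (τ.injective h)
  have hrfl : F σ (F τ S) = idx (σ (p1 (F τ S))) (σ (p2 (F τ S))) := rfl
  rcases (eq_idx_iff _ _ hne (F τ S)).mp rfl with ⟨h1, h2⟩ | ⟨h1, h2⟩
  · rw [hrfl, h1, h2]; simp [F, Equiv.Perm.mul_apply]
  · rw [hrfl, h1, h2, idx_symm]; simp [F, Equiv.Perm.mul_apply]
lemma F_one (S : Fin 6) : F 1 S = S := by
  simpa [F] using idx_p S

def permInd (σ : Equiv.Perm (Fin 4)) : Equiv.Perm (Fin 6) :=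
  ⟨F σ, F σ⁻¹,
   fun S => by rw [F_comp, inv_mul_cancel]; exact F_one S,
   fun S => by rw [F_comp, mul_inv_cancel]; exact F_one S⟩

lemma permInd_apply (σ : Equiv.Perm (Fin 4)) (S : Fin 6) : permInd σ S = F σ S := rfl
lemma permInd_one : permInd 1 = 1 := Equiv.ext fun S => F_one S
lemma permInd_mul (σ τ : Equiv.Perm (Fin 4)) :
    permInd (σ * τ) = permInd σ * permInd τ := Equiv.ext fun S => (F_comp σ τ S).symm

lemma monoMat_congr {r : ℕ} {σ τ : Equiv.Perm (Fin r)} {c b : Fin r → ℂ}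
    (h1 : σ = τ) (h2 : ∀ j, c j = b j) : monoMat σ c = monoMat τ b := by
  subst h1; exact congrArg _ (funext h2)

def Mmap (A : Matrix (Fin 4) (Fin 4) ℂ) : Matrix (Fin 6) (Fin 6) ℂ :=
  Matrix.of fun T S =>
    A (p1 T) (p1 S) * A (p2 T) (p2 S) + A (p1 T) (p2 S) * A (p2 T) (p1 S)

lemma Mmap_monoMat (σ : Equiv.Perm (Fin 4)) (c : Fin 4 → ℂ) :
    Mmap (monoMat σ c) = monoMat (permInd σ) (fun S => c (p1 S) * c (p2 S)) := by
  ext T S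
  have hne := pair_ne S
  have hne2 : σ (p1 S) ≠ σ (p2 S) := fun h => hne (σ.injective h)
  have hiff := eq_idx_iff _ _ hne2 T
  show monoMat σ c (p1 T) (p1 S) * monoMat σ c (p2 T) (p2 S)
      + monoMat σ c (p1 T) (p2 S) * monoMat σ c (p2 T) (p1 S)
      = monoMat (permInd σ) (fun S => c (p1 S) * c (p2 S)) T S
  simp only [monoMat, Matrix.of_apply]
  by_cases h : T = permInd σ S
  · rw [if_pos h]
    rcases hiff.mp h with ⟨h1, h2⟩ | ⟨h1, h2⟩
    · rw [h1, h2]; simp [hne2, hne2.symm]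
    · rw [h1, h2]; simp [hne2, hne2.symm, mul_comm]
  · rw [if_neg h]
    have hd : ¬((p1 T = σ (p1 S) ∧ p2 T = σ (p2 S)) ∨ (p1 T = σ (p2 S) ∧ p2 T = σ (p1 S))) :=
      fun hc => h (hiff.mpr hc)
    push_neg at hd
    obtain ⟨hd1, hd2⟩ := hd
    by_cases ha : p1 T = σ (p1 S)
    · have hb : ¬ p2 T = σ (p2 S) := hd1 ha
      have hc3 : ¬ p1 T = σ (p2 S) := fun hx => hne2 (ha.symm.trans hx ▸ rfl)
      simp only [ha, hb, hc3, if_true, if_false, if_neg hb, if_neg hc3, if_pos rfl]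
      simp [hne2, hne2.symm]
    · by_cases hc : p1 T = σ (p2 S)
      · have hd4 : ¬ p2 T = σ (p1 S) := hd2 hc
        simp only [if_neg ha, if_neg hd4]
        simp
      · simp [ha, hc]

lemma monoMat_mulVec {r : ℕ} (σ : Equiv.Perm (Fin r)) (c : Fin r → ℂ) (v : Fin r → ℂ) :
    (monoMat σ c).mulVec v = fun i => c (σ⁻¹ i) * v (σ⁻¹ i) := by
  funext i
  simp only [Matrix.mulVec, dotProduct, monoMat, Matrix.of_apply]
  rw [Finset.sum_eq_single (σ⁻¹ i)]
  · simp
  · intro j _ hj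
    have : i ≠ σ j := fun h => hj (by rw [h, ← Equiv.Perm.mul_apply, inv_mul_cancel, Equiv.Perm.one_apply])
    simp [this]
  · intro h; exact absurd (Finset.mem_univ _) h

def monoUnit {r : ℕ} (σ : Equiv.Perm (Fin r)) (c : Fin r → ℂ)
    (hc : ∀ i, c i * c i = 1) : GL (Fin r) ℂ :=
  ⟨monoMat σ c, monoMat σ⁻¹ (fun j => c (σ⁻¹ j)),
   by
     rw [monoMat_mul]
     have h : (fun j => c (σ⁻¹ j) * c (σ⁻¹ j)) = (1 : Fin r → ℂ) := funext fun j => hc _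
     rw [h, mul_inv_cancel, monoMat_one],
   by
     rw [monoMat_mul]
     have h : (fun j => c (σ⁻¹ (σ j)) * c j) = (1 : Fin r → ℂ) := funext fun j => by
       rw [Equiv.Perm.inv_eq_iff_eq.mpr rfl]; exact hc j
     rw [h, inv_mul_cancel, monoMat_one]⟩

lemma monoUnit_val {r : ℕ} (σ : Equiv.Perm (Fin r)) (c : Fin r → ℂ)
    (hc : ∀ i, c i * c i = 1) :
    ((monoUnit σ c hc : GL (Fin r) ℂ) : Matrix (Fin r) (Fin r) ℂ) = monoMat σ c := rfl



def sigOf (w : Gdeer 2 1 4) : Equiv.Perm (Fin 4) :=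
  (show IsGMonomial 2 1 (((w : GL (Fin 4) ℂ)) : Matrix (Fin 4) (Fin 4) ℂ) from w.2).choose

def cOf (w : Gdeer 2 1 4) : Fin 4 → ℂ :=
  (show IsGMonomial 2 1 (((w : GL (Fin 4) ℂ)) : Matrix (Fin 4) (Fin 4) ℂ) from w.2).choose_spec.choose

lemma cOf_spec (w : Gdeer 2 1 4) :
    (∀ i, cOf w i ^ (2 * 1) = 1) ∧ (∏ i, cOf w i) ^ 2 = 1 ∧
      (((w : GL (Fin 4) ℂ)) : Matrix (Fin 4) (Fin 4) ℂ) = monoMat (sigOf w) (cOf w) :=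
  (show IsGMonomial 2 1 (((w : GL (Fin 4) ℂ)) : Matrix (Fin 4) (Fin 4) ℂ) from w.2).choose_spec.choose_spec

lemma cOf_sq (w : Gdeer 2 1 4) : ∀ i, cOf w i * cOf w i = 1 := by
  intro i
  have h := (cOf_spec w).1 i
  rwa [show (2 * 1 : ℕ) = 2 by norm_num, pow_two] at h

lemma w_eq (w : Gdeer 2 1 4) :
    (((w : GL (Fin 4) ℂ)) : Matrix (Fin 4) (Fin 4) ℂ) = monoMat (sigOf w) (cOf w) :=
  (cOf_spec w).2.2

def ρu (w : Gdeer 2 1 4) : GL (Fin 6) ℂ :=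
  monoUnit (permInd (sigOf w)) (fun S => cOf w (p1 S) * cOf w (p2 S))
    (fun S => by rw [mul_mul_mul_comm, cOf_sq, cOf_sq, one_mul])

lemma ρu_val (w : Gdeer 2 1 4) :
    ((ρu w : GL (Fin 6) ℂ) : Matrix (Fin 6) (Fin 6) ℂ)
      = Mmap (((w : GL (Fin 4) ℂ)) : Matrix (Fin 4) (Fin 4) ℂ) := by
  rw [ρu, monoUnit_val, ← Mmap_monoMat, ← w_eq]

lemma Mmap_mul_mono (σ τ : Equiv.Perm (Fin 4)) (c b : Fin 4 → ℂ) :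
    Mmap (monoMat σ c * monoMat τ b) = Mmap (monoMat σ c) * Mmap (monoMat τ b) := by
  rw [monoMat_mul, Mmap_monoMat, Mmap_monoMat, Mmap_monoMat, monoMat_mul, permInd_mul]
  refine monoMat_congr rfl (fun S => ?_)
  have hne : τ (p1 S) ≠ τ (p2 S) := fun h => pair_ne S (τ.injective h)
  have hrfl : permInd τ S = idx (τ (p1 S)) (τ (p2 S)) := rfl
  rcases (eq_idx_iff _ _ hne (permInd τ S)).mp hrfl with ⟨h1, h2⟩ | ⟨h1, h2⟩
  · rw [h1, h2]; ring
  · rw [h1, h2]; ring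

lemma ρu_mul (w w' : Gdeer 2 1 4) : ρu (w * w') = ρu w * ρu w' := by
  apply Units.ext
  rw [Units.val_mul, ρu_val, ρu_val, ρu_val]
  have h : (((w * w' : Gdeer 2 1 4) : GL (Fin 4) ℂ)) = (w : GL (Fin 4) ℂ) * (w' : GL (Fin 4) ℂ) := rfl
  rw [h, Units.val_mul, w_eq w, w_eq w', Mmap_mul_mono]

def ρhom : Gdeer 2 1 4 →* GL (Fin 6) ℂ := MonoidHom.mk' ρu ρu_mul

def elt (σ : Equiv.Perm (Fin 4)) (c : Fin 4 → ℂ) (hc : ∀ i, c i * c i = 1) : Gdeer 2 1 4 :=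
  ⟨monoUnit σ c hc, σ, c,
   fun i => by rw [show (2 * 1 : ℕ) = 2 by norm_num, pow_two]; exact hc i,
   by rw [pow_two, ← Finset.prod_mul_distrib]; exact Finset.prod_eq_one fun i _ => hc i,
   rfl⟩

lemma elt_val (σ : Equiv.Perm (Fin 4)) (c : Fin 4 → ℂ) (hc : ∀ i, c i * c i = 1) :
    (((elt σ c hc : Gdeer 2 1 4) : GL (Fin 4) ℂ) : Matrix (Fin 4) (Fin 4) ℂ) = monoMat σ c := rfl

lemma one_sq' : ∀ i : Fin 4, (1 : Fin 4 → ℂ) i * (1 : Fin 4 → ℂ) i = 1 := fun i => by simp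

def c2v : Fin 4 → ℂ := fun i => if i = 2 then -1 else 1
def c3v : Fin 4 → ℂ := fun i => if i = 3 then -1 else 1
lemma c2v_sq : ∀ i, c2v i * c2v i = 1 := fun i => by unfold c2v; split <;> norm_num
lemma c3v_sq : ∀ i, c3v i * c3v i = 1 := fun i => by unfold c3v; split <;> norm_num

def s01 : Gdeer 2 1 4 := elt (Equiv.swap 0 1) 1 one_sq'
def s23 : Gdeer 2 1 4 := elt (Equiv.swap 2 3) 1 one_sq'
def gc : Gdeer 2 1 4 := elt (Equiv.swap 0 2 * Equiv.swap 1 3) 1 one_sq'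
def d2 : Gdeer 2 1 4 := elt 1 c2v c2v_sq
def d3 : Gdeer 2 1 4 := elt 1 c3v c3v_sq
def Aelt : Gdeer 2 1 4 := s01 * s23
def Belt : Gdeer 2 1 4 := d2 * d3

lemma gd_ext {x y : Gdeer 2 1 4} (h : ((x : GL (Fin 4) ℂ) : Matrix (Fin 4) (Fin 4) ℂ)
    = ((y : GL (Fin 4) ℂ) : Matrix (Fin 4) (Fin 4) ℂ)) : x = y :=
  Subtype.ext (Units.ext h)

lemma gd_mul_val (x y : Gdeer 2 1 4) :
    (((x * y : Gdeer 2 1 4) : GL (Fin 4) ℂ) : Matrix (Fin 4) (Fin 4) ℂ)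
      = ((x : GL (Fin 4) ℂ) : Matrix (Fin 4) (Fin 4) ℂ)
        * ((y : GL (Fin 4) ℂ) : Matrix (Fin 4) (Fin 4) ℂ) := rfl

lemma gd_one_val : (((1 : Gdeer 2 1 4) : GL (Fin 4) ℂ) : Matrix (Fin 4) (Fin 4) ℂ) = 1 := rfl

lemma s01_sq : s01 * s01 = 1 := by
  apply gd_ext
  rw [gd_mul_val, gd_one_val, s01, elt_val, monoMat_mul, ← monoMat_one]
  exact monoMat_congr (Equiv.swap_mul_self 0 1) (fun j => by simp)

lemma gc_sq : gc * gc = 1 := by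
  apply gd_ext
  rw [gd_mul_val, gd_one_val, gc, elt_val, monoMat_mul, ← monoMat_one]
  exact monoMat_congr (Equiv.ext (by decide)) (fun j => by simp)

lemma gc_conj : gc * s01 * gc = s23 := by
  apply gd_ext
  rw [gd_mul_val, gd_mul_val, gc, s01, s23, elt_val, elt_val, elt_val, monoMat_mul, monoMat_mul]
  exact monoMat_congr (Equiv.ext (by decide)) (fun j => by simp)

lemma d2_sq : d2 * d2 = 1 := by
  apply gd_ext
  rw [gd_mul_val, gd_one_val, d2, elt_val, monoMat_mul, ← monoMat_one]
  exact monoMat_congr (Equiv.ext (by decide)) (fun j => by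
    simp only [Equiv.Perm.one_apply, Pi.one_apply]; exact c2v_sq j)

lemma s23_sq : s23 * s23 = 1 := by
  apply gd_ext
  rw [gd_mul_val, gd_one_val, s23, elt_val, monoMat_mul, ← monoMat_one]
  exact monoMat_congr (Equiv.swap_mul_self 2 3) (fun j => by simp)

lemma s23_conj : s23 * d2 * s23 = d3 := by
  apply gd_ext
  rw [gd_mul_val, gd_mul_val, s23, d2, d3, elt_val, elt_val, elt_val, monoMat_mul, monoMat_mul]
  refine monoMat_congr (Equiv.ext (by decide)) (fun j => ?_)
  fin_cases j <;> norm_num [c2v, c3v, Equiv.swap_apply_def, Fin.ext_iff] <;> first | rfl | (rw [if_neg (by decide), if_neg (by decide)])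

lemma chiA (χ : Gdeer 2 1 4 →* ℂˣ) : χ Aelt = 1 := by
  have h1 : χ s23 = χ s01 := by
    rw [← gc_conj, _root_.map_mul, _root_.map_mul, mul_comm (χ gc) (χ s01), mul_assoc, ← _root_.map_mul, gc_sq,
      _root_.map_one, mul_one]
  rw [show Aelt = s01 * s23 from rfl, _root_.map_mul, h1, ← _root_.map_mul, s01_sq, _root_.map_one]

lemma chiB (χ : Gdeer 2 1 4 →* ℂˣ) : χ Belt = 1 := by
  have h1 : χ d3 = χ d2 := by
    rw [← s23_conj, _root_.map_mul, _root_.map_mul, mul_comm (χ s23) (χ d2), mul_assoc, ← _root_.map_mul, s23_sq,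
      _root_.map_one, mul_one]
  rw [show Belt = d2 * d3 from rfl, _root_.map_mul, h1, ← _root_.map_mul, d2_sq, _root_.map_one]


def Amat : Matrix (Fin 4) (Fin 4) ℂ := !![0,1,0,0; 1,0,0,0; 0,0,0,1; 0,0,1,0]
def Bmat : Matrix (Fin 4) (Fin 4) ℂ := !![1,0,0,0; 0,1,0,0; 0,0,-1,0; 0,0,0,-1]
def Qmat : Matrix (Fin 4) (Fin 4) ℂ := !![1,0,1,0; 1,0,-1,0; 0,1,0,1; 0,1,0,-1]
def Qinv : Matrix (Fin 4) (Fin 4) ℂ :=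
  !![1/2,1/2,0,0; 0,0,1/2,1/2; 1/2,-1/2,0,0; 0,0,1/2,-1/2]

lemma Aelt_val : ((Aelt : GL (Fin 4) ℂ) : Matrix (Fin 4) (Fin 4) ℂ) = Amat := by
  show monoMat (Equiv.swap 0 1) 1 * monoMat (Equiv.swap 2 3) 1 = Amat
  rw [monoMat_mul]
  ext i j
  fin_cases i <;> fin_cases j <;>
    norm_num [monoMat, Amat, Equiv.swap_apply_def, Equiv.Perm.mul_apply] <;> decide

lemma Belt_val : ((Belt : GL (Fin 4) ℂ) : Matrix (Fin 4) (Fin 4) ℂ) = Bmat := by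
  show monoMat 1 c2v * monoMat 1 c3v = Bmat
  rw [monoMat_mul]
  ext i j
  fin_cases i <;> fin_cases j <;>
    norm_num [monoMat, Bmat, c2v, c3v, Equiv.Perm.one_apply, Fin.ext_iff] <;> decide

lemma QQi : Qmat * Qinv = 1 := by
  ext i j
  fin_cases i <;> fin_cases j <;>
    norm_num [Matrix.mul_apply, Fin.sum_univ_four, Qmat, Qinv, Matrix.one_apply, Fin.ext_iff, Matrix.vecHead, Matrix.vecTail, Matrix.cons_val_two, Matrix.cons_val_three]

lemma QiQ : Qinv * Qmat = 1 := by
  ext i j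
  fin_cases i <;> fin_cases j <;>
    norm_num [Matrix.mul_apply, Fin.sum_univ_four, Qmat, Qinv, Matrix.one_apply, Fin.ext_iff, Matrix.vecHead, Matrix.vecTail, Matrix.cons_val_two, Matrix.cons_val_three]

lemma QBQ : Qmat * Bmat * Qinv = Amat := by
  ext i j
  fin_cases i <;> fin_cases j <;>
    norm_num [Matrix.mul_apply, Fin.sum_univ_four, Qmat, Qinv, Bmat, Amat, Fin.ext_iff, Matrix.vecHead, Matrix.vecTail, Matrix.cons_val_two, Matrix.cons_val_three]

lemma traceA : Matrix.trace (Mmap Amat) = 2 := by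
  simp only [Matrix.trace, Matrix.diag, Mmap, Matrix.of_apply, Fin.sum_univ_six]
  norm_num [p1, p2, Amat, Matrix.vecHead, Matrix.vecTail, Matrix.cons_val_two, Matrix.cons_val_three,
    show (![0,0,0,1,1,2] : Fin 6 → Fin 4) 5 = 2 from rfl, show (![0,0,0,1,1,2] : Fin 6 → Fin 4) 4 = 1 from rfl, show (![1,2,3,2,3,3] : Fin 6 → Fin 4) 4 = 3 from rfl, show (![1,2,3,2,3,3] : Fin 6 → Fin 4) 5 = 3 from rfl]

lemma traceB : Matrix.trace (Mmap Bmat) = -2 := by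
  simp only [Matrix.trace, Matrix.diag, Mmap, Matrix.of_apply, Fin.sum_univ_six]
  norm_num [p1, p2, Bmat, Matrix.vecHead, Matrix.vecTail, Matrix.cons_val_two, Matrix.cons_val_three,
    show (![0,0,0,1,1,2] : Fin 6 → Fin 4) 5 = 2 from rfl, show (![0,0,0,1,1,2] : Fin 6 → Fin 4) 4 = 1 from rfl, show (![1,2,3,2,3,3] : Fin 6 → Fin 4) 4 = 3 from rfl, show (![1,2,3,2,3,3] : Fin 6 → Fin 4) 5 = 3 from rfl]

def dvec (j : Fin 4) : Fin 4 → ℂ := fun i => if i = j then -1 else 1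
lemma dvec_sq (j : Fin 4) : ∀ i, dvec j i * dvec j i = 1 := fun i => by
  unfold dvec; split <;> norm_num
def Dj (j : Fin 4) : Gdeer 2 1 4 := elt 1 (dvec j) (dvec_sq j)
def chi (T : Fin 6) (j : Fin 4) : ℂ := dvec j (p1 T) * dvec j (p2 T)

lemma chi_mul_self (T : Fin 6) (j : Fin 4) : chi T j * chi T j = 1 := by
  unfold chi; rw [mul_mul_mul_comm, dvec_sq, dvec_sq, one_mul]

lemma chi_eq (T : Fin 6) (j : Fin 4) :
    chi T j = if (p1 T = j ∨ p2 T = j) then -1 else 1 := by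
  have hne := pair_ne T
  unfold chi dvec
  by_cases h1 : p1 T = j
  · have h2 : ¬ p2 T = j := fun h => hne (h1.trans h.symm)
    simp [h1, h2]
  · by_cases h2 : p2 T = j <;> simp [h1, h2]

lemma chi_diff (T S : Fin 6) (h : T ≠ S) : ∃ j, chi S j * chi T j = -1 := by
  have key : ∀ T S : Fin 6, T ≠ S →
      ∃ j : Fin 4, ¬((p1 T = j ∨ p2 T = j) ↔ (p1 S = j ∨ p2 S = j)) := by decide
  obtain ⟨j, hj⟩ := key T S h
  refine ⟨j, ?_⟩
  rw [chi_eq, chi_eq]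
  by_cases h1 : (p1 S = j ∨ p2 S = j) <;> by_cases h2 : (p1 T = j ∨ p2 T = j)
  · exact absurd (iff_of_true h2 h1) hj
  · simp [h1, h2]
  · simp [h1, h2]
  · exact absurd (iff_of_false h2 h1) hj

end B4aux

open B4aux in
lemma extPowMap_id' (k : ℕ) {M : Type*} [AddCommGroup M] [Module ℂ M] :
    extPowMap k (LinearMap.id : M →ₗ[ℂ] M) = LinearMap.id := by
  refine LinearMap.ext fun x => Subtype.ext ?_
  simp only [extPowMap, LinearMap.restrict_coe_apply, ExteriorAlgebra.map_id]
  rfl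

lemma extPowMap_comp' (k : ℕ) {M : Type*} [AddCommGroup M] [Module ℂ M]
    (f g : M →ₗ[ℂ] M) :
    extPowMap k (f ∘ₗ g) = (extPowMap k f) ∘ₗ (extPowMap k g) := by
  refine LinearMap.ext fun x => Subtype.ext ?_
  simp only [LinearMap.comp_apply, extPowMap, LinearMap.restrict_coe_apply]
  rw [← ExteriorAlgebra.map_comp_map g f]
  rfl

namespace B4aux

lemma trace_extPow_conj (k : ℕ) :
    LinearMap.trace ℂ (⋀[ℂ]^k (Fin 4 → ℂ)) (extPowMap k Amat.mulVecLin)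
      = LinearMap.trace ℂ (⋀[ℂ]^k (Fin 4 → ℂ)) (extPowMap k Bmat.mulVecLin) := by
  let E : (⋀[ℂ]^k (Fin 4 → ℂ)) ≃ₗ[ℂ] (⋀[ℂ]^k (Fin 4 → ℂ)) :=
    LinearEquiv.ofLinear (extPowMap k Qmat.mulVecLin) (extPowMap k Qinv.mulVecLin)
      (by rw [← extPowMap_comp', ← Matrix.mulVecLin_mul, QQi, Matrix.mulVecLin_one,
            extPowMap_id'])
      (by rw [← extPowMap_comp', ← Matrix.mulVecLin_mul, QiQ, Matrix.mulVecLin_one,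
            extPowMap_id'])
  have hE : extPowMap k Amat.mulVecLin = E.conj (extPowMap k Bmat.mulVecLin) := by
    rw [LinearEquiv.conj_apply]
    have h1 : (E : (⋀[ℂ]^k (Fin 4 → ℂ)) →ₗ[ℂ] (⋀[ℂ]^k (Fin 4 → ℂ)))
        = extPowMap k Qmat.mulVecLin := rfl
    have h2 : (E.symm : (⋀[ℂ]^k (Fin 4 → ℂ)) →ₗ[ℂ] (⋀[ℂ]^k (Fin 4 → ℂ)))
        = extPowMap k Qinv.mulVecLin := rfl
    rw [h1, h2, ← extPowMap_comp', ← extPowMap_comp', ← Matrix.mulVecLin_mul,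
      ← Matrix.mulVecLin_mul, QBQ]
  rw [hE, LinearMap.trace_conj']

end B4aux


/-- **The representation ring of the Coxeter group of type `B_4` is NOT generated by the
one-dimensional representations and the exterior powers of the natural representation.**
For `W = G(2,1,4)` the group of signed permutation `4×4` matrices, there exists an
irreducible complex representation of `W` whose character does not lie in the subring of
functions `W → ℂ` generated by all one-dimensional characters together with the
characters of `Λ^k(ℂ⁴)`, `0 ≤ k ≤ 4`. -/
theorem repRing_B4_not_generated :
    ∃ (N : ℕ) (ρ : Gdeer 2 1 4 →* GL (Fin N) ℂ),
      (∀ p : Submodule ℂ (Fin N → ℂ),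
        (∀ w : Gdeer 2 1 4, ∀ v ∈ p,
          (ρ w : Matrix (Fin N) (Fin N) ℂ).mulVec v ∈ p) → p = ⊥ ∨ p = ⊤) ∧
      (fun w => Matrix.trace (ρ w : Matrix (Fin N) (Fin N) ℂ)) ∉
        Subring.closure
          ({f : Gdeer 2 1 4 → ℂ | ∃ χ : Gdeer 2 1 4 →* ℂˣ, f = fun w => (χ w : ℂ)} ∪
            {f : Gdeer 2 1 4 → ℂ | ∃ k ≤ 4, f = fun (w : Gdeer 2 1 4) =>
              LinearMap.trace ℂ (⋀[ℂ]^k (Fin 4 → ℂ))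
                (extPowMap k
                  (((w : GL (Fin 4) ℂ) : Matrix (Fin 4) (Fin 4) ℂ).mulVecLin))}) := by
    classical
  refine ⟨6, B4aux.ρhom, ?_, ?_⟩
  · -- irreducibility
    intro p hp
    by_cases hbot : p = ⊥
    · exact Or.inl hbot
    refine Or.inr ?_
    obtain ⟨v, hv, hv0⟩ := (Submodule.ne_bot_iff p).mp hbot
    obtain ⟨S, hS⟩ : ∃ S, v S ≠ 0 := by
      by_contra hc; push_neg at hc; exact hv0 (funext hc)
    have hDval : ∀ j : Fin 4,
        ((B4aux.ρhom (B4aux.Dj j) : GL (Fin 6) ℂ) : Matrix (Fin 6) (Fin 6) ℂ)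
          = monoMat 1 (fun T => B4aux.chi T j) := by
      intro j
      have h1 : B4aux.ρhom (B4aux.Dj j) = B4aux.ρu (B4aux.Dj j) := rfl
      rw [h1, B4aux.ρu_val]
      have h2 : (((B4aux.Dj j : Gdeer 2 1 4) : GL (Fin 4) ℂ) : Matrix (Fin 4) (Fin 4) ℂ)
          = monoMat 1 (B4aux.dvec j) := rfl
      rw [h2, B4aux.Mmap_monoMat, B4aux.permInd_one]
      rfl
    have hDmul : ∀ (j : Fin 4) (u : Fin 6 → ℂ),
        ((B4aux.ρhom (B4aux.Dj j) : GL (Fin 6) ℂ) : Matrix (Fin 6) (Fin 6) ℂ).mulVec u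
          = fun T => B4aux.chi T j * u T := by
      intro j u
      rw [hDval, B4aux.monoMat_mulVec]
      funext T
      simp
    have step : ∀ (j : Fin 4) (s : ℂ) (u : Fin 6 → ℂ), u ∈ p →
        (fun T => (1 + s * B4aux.chi T j) * u T) ∈ p := by
      intro j s u hu
      have h1 := hp (B4aux.Dj j) u hu
      rw [hDmul] at h1
      have h2 := p.add_mem hu (p.smul_mem s h1)
      have h3 : (u + s • fun T => B4aux.chi T j * u T)
          = fun T => (1 + s * B4aux.chi T j) * u T := by
        funext T
        simp only [Pi.add_apply, Pi.smul_apply, smul_eq_mul]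
        ring
      rwa [h3] at h2
    have hwp : (fun T => (1 + B4aux.chi S 3 * B4aux.chi T 3) *
        ((1 + B4aux.chi S 2 * B4aux.chi T 2) * ((1 + B4aux.chi S 1 * B4aux.chi T 1) *
        ((1 + B4aux.chi S 0 * B4aux.chi T 0) * v T)))) ∈ p :=
      step 3 _ _ (step 2 _ _ (step 1 _ _ (step 0 _ _ hv)))
    have hwS : (fun T => (1 + B4aux.chi S 3 * B4aux.chi T 3) *
        ((1 + B4aux.chi S 2 * B4aux.chi T 2) * ((1 + B4aux.chi S 1 * B4aux.chi T 1) *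
        ((1 + B4aux.chi S 0 * B4aux.chi T 0) * v T))))
        = ((16 * v S) • (Pi.single S 1 : Fin 6 → ℂ)) := by
      funext T
      by_cases hTS : T = S
      · subst hTS
        simp only [Pi.smul_apply, Pi.single_eq_same, smul_eq_mul, mul_one]
        rw [B4aux.chi_mul_self, B4aux.chi_mul_self, B4aux.chi_mul_self, B4aux.chi_mul_self]
        ring
      · obtain ⟨j, hj⟩ := B4aux.chi_diff T S hTS
        simp only [Pi.smul_apply, smul_eq_mul, Pi.single_eq_of_ne hTS, mul_zero]
        have h0 : 1 + B4aux.chi S j * B4aux.chi T j = 0 := by rw [hj]; ring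
        have hprod : (∏ jj : Fin 4, (1 + B4aux.chi S jj * B4aux.chi T jj)) = 0 :=
          Finset.prod_eq_zero (Finset.mem_univ j) h0
        calc (1 + B4aux.chi S 3 * B4aux.chi T 3) *
              ((1 + B4aux.chi S 2 * B4aux.chi T 2) * ((1 + B4aux.chi S 1 * B4aux.chi T 1) *
              ((1 + B4aux.chi S 0 * B4aux.chi T 0) * v T)))
            = (∏ jj : Fin 4, (1 + B4aux.chi S jj * B4aux.chi T jj)) * v T := by
              rw [Fin.prod_univ_four]; ring
          _ = 0 := by rw [hprod, zero_mul]
    rw [hwS] at hwp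
    have h16 : (16 * v S : ℂ) ≠ 0 := mul_ne_zero (by norm_num) hS
    have hsingle : (Pi.single S 1 : Fin 6 → ℂ) ∈ p := by
      have h5 := p.smul_mem (16 * v S)⁻¹ hwp
      rwa [smul_smul, inv_mul_cancel₀ h16, one_smul] at h5
    have hall : ∀ T : Fin 6, (Pi.single T 1 : Fin 6 → ℂ) ∈ p := by
      intro T
      obtain ⟨σ, h1, h2⟩ : ∃ σ : Equiv.Perm (Fin 4),
          σ (B4aux.p1 S) = B4aux.p1 T ∧ σ (B4aux.p2 S) = B4aux.p2 T :=
        (by decide : ∀ S T : Fin 6, ∃ σ : Equiv.Perm (Fin 4),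
          σ (B4aux.p1 S) = B4aux.p1 T ∧ σ (B4aux.p2 S) = B4aux.p2 T) S T
      have hmem := hp (B4aux.elt σ 1 B4aux.one_sq') _ hsingle
      have hval : ((B4aux.ρhom (B4aux.elt σ 1 B4aux.one_sq') : GL (Fin 6) ℂ) :
          Matrix (Fin 6) (Fin 6) ℂ) = monoMat (B4aux.permInd σ) 1 := by
        have hr : B4aux.ρhom (B4aux.elt σ 1 B4aux.one_sq')
            = B4aux.ρu (B4aux.elt σ 1 B4aux.one_sq') := rfl
        rw [hr, B4aux.ρu_val, B4aux.elt_val, B4aux.Mmap_monoMat]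
        exact B4aux.monoMat_congr rfl (fun j => by simp)
      rw [hval, B4aux.monoMat_mulVec] at hmem
      have hT : B4aux.permInd σ S = T := by
        show B4aux.F σ S = T
        rw [B4aux.F, h1, h2, B4aux.idx_p]
      have heq : (fun i => (1 : Fin 6 → ℂ) ((B4aux.permInd σ)⁻¹ i) *
          (Pi.single S 1 : Fin 6 → ℂ) ((B4aux.permInd σ)⁻¹ i)) = (Pi.single T 1 : Fin 6 → ℂ) := by
        funext i
        rw [Pi.one_apply, one_mul]
        by_cases hi : i = T
        · subst hi
          rw [← hT, Equiv.Perm.inv_eq_iff_eq.mpr rfl, Pi.single_eq_same, Pi.single_eq_same]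
        · rw [Pi.single_eq_of_ne hi, Pi.single_eq_of_ne]
          intro hx
          exact hi (by rw [← hT, ← hx, ← Equiv.Perm.mul_apply, mul_inv_cancel, Equiv.Perm.one_apply])
      rwa [heq] at hmem
    rw [Submodule.eq_top_iff']
    intro u
    have hu : u = ∑ T : Fin 6, u T • (Pi.single T 1 : Fin 6 → ℂ) := by
      conv_lhs => rw [← Finset.univ_sum_single u]
      refine Finset.sum_congr rfl fun T _ => ?_
      rw [← Pi.single_smul, smul_eq_mul, mul_one]
    rw [hu]
    exact Submodule.sum_mem p fun T _ => p.smul_mem _ (hall T)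
  · -- character is not in the subring
    intro hmem
    set φ : ((Gdeer 2 1 4 → ℂ)) →+* ℂ := Pi.evalRingHom (fun _ => ℂ) B4aux.Aelt with hφ
    set ψ : ((Gdeer 2 1 4 → ℂ)) →+* ℂ := Pi.evalRingHom (fun _ => ℂ) B4aux.Belt with hψ
    have hsub : ({f : Gdeer 2 1 4 → ℂ | ∃ χ : Gdeer 2 1 4 →* ℂˣ, f = fun w => (χ w : ℂ)} ∪
        {f : Gdeer 2 1 4 → ℂ | ∃ k ≤ 4, f = fun (w : Gdeer 2 1 4) =>
          LinearMap.trace ℂ (⋀[ℂ]^k (Fin 4 → ℂ))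
            (extPowMap k
              (((w : GL (Fin 4) ℂ) : Matrix (Fin 4) (Fin 4) ℂ).mulVecLin))})
        ⊆ ↑(RingHom.eqLocus φ ψ) := by
      rintro f (⟨χ, rfl⟩ | ⟨k, hk, rfl⟩)
      · show (χ B4aux.Aelt : ℂ) = (χ B4aux.Belt : ℂ)
        rw [B4aux.chiA χ, B4aux.chiB χ]
      · show LinearMap.trace ℂ _ (extPowMap k
            (((B4aux.Aelt : GL (Fin 4) ℂ) : Matrix (Fin 4) (Fin 4) ℂ).mulVecLin))
          = LinearMap.trace ℂ _ (extPowMap k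
            (((B4aux.Belt : GL (Fin 4) ℂ) : Matrix (Fin 4) (Fin 4) ℂ).mulVecLin))
        rw [B4aux.Aelt_val, B4aux.Belt_val]
        exact B4aux.trace_extPow_conj k
    have h2 := (Subring.closure_le.mpr hsub) hmem
    have h3 : Matrix.trace ((B4aux.ρhom B4aux.Aelt : GL (Fin 6) ℂ) :
          Matrix (Fin 6) (Fin 6) ℂ)
        = Matrix.trace ((B4aux.ρhom B4aux.Belt : GL (Fin 6) ℂ) :
          Matrix (Fin 6) (Fin 6) ℂ) := h2
    have hA : B4aux.ρhom B4aux.Aelt = B4aux.ρu B4aux.Aelt := rfl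
    have hB : B4aux.ρhom B4aux.Belt = B4aux.ρu B4aux.Belt := rfl
    rw [hA, hB, B4aux.ρu_val, B4aux.ρu_val, B4aux.Aelt_val, B4aux.Belt_val,
      B4aux.traceA, B4aux.traceB] at h3
    norm_num at h3
end
end
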